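/- arXiv:2507.11696 — 6 statements merged into one kernel-verified Lean document; each statement's English description precedes it below -/
import Mathlib

section
/- For every integer k and every real δ with 0 ≤ δ < π/N, the spectrum (set of eigenvalues in ℂ) of the Harper matrix h(a, (2k+1)π/N + δ, ε) equals the spectrum of h(a, π/N − δ, ε), for all real a, ε. -/
open Matrix Complex

/-- The primitive `N`-th root of unity `ω = exp(2πi/N)`. -/
noncomputable def omegaN (N : ℕ) : ℂ := Complex.exp (2 * (Real.pi : ℂ) * Complex.I / (N : ℂ))

/-- The clock matrix `Z` with `Z_{jk} = ω^j` if `j = k`, `0` otherwise. -/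
noncomputable def clockZ (N : ℕ) : Matrix (Fin N) (Fin N) ℂ :=
  Matrix.diagonal fun j => omegaN N ^ (j : ℕ)

/-- The shift matrix `X` with `X_{jk} = 1` if `j = k + 1 (mod N)`, `0` otherwise. -/
def shiftX (N : ℕ) : Matrix (Fin N) (Fin N) ℂ :=
  Matrix.of fun j k => if (j : ℕ) = ((k : ℕ) + 1) % N then 1 else 0

/-- The shifted Harper matrix
`h(a,b,ε) = (a/2)·e^{ib}·X + (a/2)·e^{−ib}·Xᴴ + (ε/2)·(Z + Zᴴ)`. -/
noncomputable def harper (N : ℕ) (a b ε : ℝ) : Matrix (Fin N) (Fin N) ℂ :=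
  ((a : ℂ) / 2 * Complex.exp ((b : ℂ) * Complex.I)) • shiftX N
  + ((a : ℂ) / 2 * Complex.exp (-(b : ℂ) * Complex.I)) • (shiftX N)ᴴ
  + ((ε : ℂ) / 2) • (clockZ N + (clockZ N)ᴴ)

/-- The parity matrix `P` with `P_{jk} = 1` if `j + k ≡ 0 (mod N)`, `0` otherwise. -/
def parityP (N : ℕ) : Matrix (Fin N) (Fin N) ℂ :=
  Matrix.of fun j k => if ((j : ℕ) + (k : ℕ)) % N = 0 then 1 else 0

/-- The discrete Fourier transform matrix `Q` with `Q_{jk} = ω^{jk}/√N`. -/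
noncomputable def dftQ (N : ℕ) : Matrix (Fin N) (Fin N) ℂ :=
  Matrix.of fun j k => omegaN N ^ ((j : ℕ) * (k : ℕ)) / (Real.sqrt N : ℂ)

lemma omega_ne_zero (N : ℕ) : omegaN N ≠ 0 := Complex.exp_ne_zero _

lemma star_omega (N : ℕ) : star (omegaN N) = (omegaN N)⁻¹ := by
  rw [omegaN, ← Complex.exp_neg, Complex.star_def, ← Complex.exp_conj]
  congr 1
  simp [map_div₀, map_ofNat]
  ring

lemma omega_mul_star (N : ℕ) : omegaN N * star (omegaN N) = 1 := by
  rw [star_omega, mul_inv_cancel₀ (omega_ne_zero N)]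

lemma omega_pow_N {N : ℕ} (hN : N ≠ 0) : omegaN N ^ N = 1 := by
  rw [omegaN, ← Complex.exp_nat_mul]
  have h : (N : ℂ) ≠ 0 := Nat.cast_ne_zero.mpr hN
  rw [show (N : ℂ) * (2 * (Real.pi : ℂ) * Complex.I / (N : ℂ)) = 2 * Real.pi * Complex.I by
    field_simp]
  exact Complex.exp_two_pi_mul_I




lemma pow_mod_eq {ω : ℂ} {N : ℕ} (h1 : ω ^ N = 1) (m : ℕ) : ω ^ (m % N) = ω ^ m := by
  conv_rhs => rw [← Nat.mod_add_div m N]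
  rw [pow_add, pow_mul, h1, one_pow, mul_one]

lemma clockZ_conjTranspose (N : ℕ) :
    (clockZ N)ᴴ = Matrix.diagonal fun j : Fin N => star (omegaN N ^ (j : ℕ)) := by
  rw [clockZ, Matrix.diagonal_conjTranspose]
  rfl

lemma clockZ_mul_star (N : ℕ) : clockZ N * (clockZ N)ᴴ = 1 := by
  rw [clockZ_conjTranspose, clockZ, Matrix.diagonal_mul_diagonal]
  convert Matrix.diagonal_one using 2
  ext j
  rw [star_pow, ← mul_pow, omega_mul_star, one_pow]

lemma star_clockZ_mul (N : ℕ) : (clockZ N)ᴴ * clockZ N = 1 := by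
  rw [clockZ_conjTranspose, clockZ, Matrix.diagonal_mul_diagonal]
  convert Matrix.diagonal_one using 2
  ext j
  rw [star_pow, ← mul_pow, mul_comm, omega_mul_star, one_pow]

lemma conj_shiftX {N : ℕ} (hN : N ≠ 0) :
    clockZ N * shiftX N * (clockZ N)ᴴ = omegaN N • shiftX N := by
  ext j k
  rw [clockZ_conjTranspose, clockZ, Matrix.mul_diagonal, Matrix.diagonal_mul]
  simp only [shiftX, Matrix.smul_apply, Matrix.of_apply, smul_eq_mul, mul_ite, mul_one, mul_zero,
    ite_mul, zero_mul]
  by_cases hjk : (j : ℕ) = ((k : ℕ) + 1) % N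
  · simp only [hjk, if_pos rfl, if_true]
    rw [star_pow, star_omega, pow_mod_eq (omega_pow_N hN), pow_succ, inv_pow]
    rw [mul_right_comm, mul_inv_cancel₀ (pow_ne_zero _ (omega_ne_zero N)), one_mul]
  · simp [hjk]

lemma conj_shiftX' {N : ℕ} (hN : N ≠ 0) :
    clockZ N * (shiftX N)ᴴ * (clockZ N)ᴴ = star (omegaN N) • (shiftX N)ᴴ := by
  have h := congrArg Matrix.conjTranspose (conj_shiftX hN)
  simpa [Matrix.conjTranspose_mul, Matrix.conjTranspose_smul, mul_assoc] using h


lemma harper_shift {N : ℕ} (hN : N ≠ 0) (a b ε : ℝ) :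
    harper N a (b + 2 * Real.pi / N) ε = clockZ N * harper N a b ε * (clockZ N)ᴴ := by
  have e1 : Complex.exp (((b + 2 * Real.pi / N : ℝ) : ℂ) * Complex.I)
      = Complex.exp ((b : ℂ) * Complex.I) * omegaN N := by
    rw [omegaN, ← Complex.exp_add]
    congr 1
    have : ((N:ℝ) : ℂ) = (N : ℂ) := by norm_cast
    push_cast
    ring
  have e2 : Complex.exp (-((b + 2 * Real.pi / N : ℝ) : ℂ) * Complex.I)
      = Complex.exp (-(b : ℂ) * Complex.I) * star (omegaN N) := by
    rw [star_omega, omegaN, ← Complex.exp_neg, ← Complex.exp_add]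
    congr 1
    push_cast
    ring
  rw [harper, harper, e1, e2]
  have hZ1 : clockZ N * clockZ N * (clockZ N)ᴴ = clockZ N := by
    rw [mul_assoc, clockZ_mul_star, mul_one]
  have hZ2 : clockZ N * (clockZ N)ᴴ * (clockZ N)ᴴ = (clockZ N)ᴴ := by
    rw [clockZ_mul_star, one_mul]
  simp only [Matrix.mul_add, Matrix.add_mul, Matrix.mul_smul, Matrix.smul_mul]
  rw [conj_shiftX hN, conj_shiftX' hN, hZ1, hZ2, smul_smul, smul_smul, mul_assoc, mul_assoc]

lemma shiftX_transpose (N : ℕ) : (shiftX N)ᵀ = (shiftX N)ᴴ := by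
  ext j k
  simp [shiftX, Matrix.transpose_apply, Matrix.conjTranspose_apply, apply_ite star]

lemma shiftX_conjTranspose_transpose (N : ℕ) : ((shiftX N)ᴴ)ᵀ = shiftX N := by
  ext j k
  simp [shiftX, Matrix.transpose_apply, Matrix.conjTranspose_apply, apply_ite star]

lemma clockZ_transpose (N : ℕ) : (clockZ N)ᵀ = clockZ N := by
  rw [clockZ, Matrix.diagonal_transpose]

lemma clockZ_ct_transpose (N : ℕ) : ((clockZ N)ᴴ)ᵀ = (clockZ N)ᴴ := by
  rw [clockZ_conjTranspose, Matrix.diagonal_transpose]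

lemma harper_neg (N : ℕ) (a b ε : ℝ) : harper N a (-b) ε = (harper N a b ε)ᵀ := by
  rw [harper, harper]
  simp only [Matrix.transpose_add, Matrix.transpose_smul, shiftX_transpose,
    shiftX_conjTranspose_transpose, clockZ_transpose, clockZ_ct_transpose]
  push_cast
  rw [neg_neg, add_comm (((a:ℂ)/2 * Complex.exp ((b:ℂ) * Complex.I)) • (shiftX N)ᴴ)]

lemma spec_transpose {N : ℕ} (M : Matrix (Fin N) (Fin N) ℂ) :
    spectrum ℂ Mᵀ = spectrum ℂ M := by
  ext μ
  simp only [spectrum.mem_iff]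
  have : algebraMap ℂ (Matrix (Fin N) (Fin N) ℂ) μ - Mᵀ
      = (algebraMap ℂ (Matrix (Fin N) (Fin N) ℂ) μ - M)ᵀ := by
    rw [Matrix.transpose_sub]
    congr 1
    simp [Matrix.algebraMap_eq_diagonal]
  rw [this, Matrix.isUnit_iff_isUnit_det, Matrix.det_transpose, ← Matrix.isUnit_iff_isUnit_det]

lemma spec_conj {N : ℕ} (M : Matrix (Fin N) (Fin N) ℂ) :
    spectrum ℂ (clockZ N * M * (clockZ N)ᴴ) = spectrum ℂ M := by
  let u : (Matrix (Fin N) (Fin N) ℂ)ˣ :=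
    ⟨clockZ N, (clockZ N)ᴴ, clockZ_mul_star N, star_clockZ_mul N⟩
  exact spectrum.units_conjugate (u := u)

lemma spec_shift {N : ℕ} (hN : N ≠ 0) (a ε b : ℝ) (m : ℤ) :
    spectrum ℂ (harper N a (b + 2 * Real.pi * m / N) ε) = spectrum ℂ (harper N a b ε) := by
  induction m using Int.induction_on with
  | zero => norm_num
  | succ n ih =>
    have e : b + 2 * Real.pi * ((n : ℤ) + 1 : ℤ) / N
        = (b + 2 * Real.pi * (n : ℤ) / N) + 2 * Real.pi / N := by
      push_cast; ring
    rw [e, harper_shift hN, spec_conj, ih]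
  | pred n ih =>
    have e : b + 2 * Real.pi * (-(n : ℤ) : ℤ) / N
        = (b + 2 * Real.pi * (-(n : ℤ) - 1 : ℤ) / N) + 2 * Real.pi / N := by
      push_cast; ring
    rw [e, harper_shift hN, spec_conj] at ih
    exact ih


/-- The spectrum of `h(a, (2k+1)π/N + δ, ε)` equals the spectrum of `h(a, π/N − δ, ε)`. -/
theorem harper_spectrum_reflect (N : ℕ) (hN : 2 ≤ N) (k : ℤ) (δ : ℝ)
    (hδ0 : 0 ≤ δ) (hδ1 : δ < Real.pi / N) (a ε : ℝ) :
    spectrum ℂ (harper N a ((2 * (k : ℝ) + 1) * Real.pi / N + δ) ε)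
      = spectrum ℂ (harper N a (Real.pi / N - δ) ε) := by
  have hN0 : N ≠ 0 := by omega
  have e : (2 * (k : ℝ) + 1) * Real.pi / N + δ
      = (-(Real.pi / N - δ)) + 2 * Real.pi * ((k + 1 : ℤ) : ℝ) / N := by
    push_cast; ring
  rw [e, spec_shift hN0, harper_neg, spec_transpose]
end

section
/- For all real a and ε, the matrix P·Zᴴ commutes with the Harper matrix at b = π/N: (P·Zᴴ) · h(a, π/N, ε) = h(a, π/N, ε) · (P·Zᴴ). -/
open Matrix Complex

private lemma pow_val_mod {ζ : ℂ} {N : ℕ} (h : ζ ^ N = 1) (m : ℕ) :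
    ζ ^ (m % N) = ζ ^ m := by
  conv_rhs => rw [← Nat.div_add_mod m N]
  rw [pow_add, pow_mul, h, one_pow, one_mul]

/-- The matrix `P·Zᴴ` commutes with the Harper matrix at `b = π/N`. -/
theorem parity_clock_commutes_harper (N : ℕ) (hN : 2 ≤ N) (a ε : ℝ) :
    (parityP N * (clockZ N)ᴴ) * harper N a (Real.pi / N) ε
      = harper N a (Real.pi / N) ε * (parityP N * (clockZ N)ᴴ) := by
  haveI : NeZero N := ⟨by omega⟩
  have hNC : (N : ℂ) ≠ 0 := Nat.cast_ne_zero.mpr (by omega)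
  set ω : ℂ := omegaN N with hωdef
  set ωb : ℂ := (starRingEnd ℂ) ω with hωbdef
  -- scalar facts
  have hωN : ω ^ N = 1 := by
    rw [hωdef, omegaN, ← Complex.exp_nat_mul,
      show (N : ℂ) * (2 * (Real.pi : ℂ) * Complex.I / (N : ℂ)) = 2 * Real.pi * Complex.I by
        field_simp]
    exact Complex.exp_two_pi_mul_I
  have hωb : ωb = Complex.exp (-(2 * (Real.pi : ℂ) * Complex.I / (N : ℂ))) := by
    rw [hωbdef, hωdef, omegaN, ← Complex.exp_conj]
    congr 1
    simp only [map_div₀, _root_.map_mul, Complex.conj_I, Complex.conj_ofReal,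
      Complex.conj_natCast, map_ofNat]
    ring
  have hωbN : ωb ^ N = 1 := by
    rw [hωbdef, ← map_pow, hωN]
    exact RingHom.map_one _
  have hωmul : ω * ωb = 1 := by
    rw [hωdef, hωb, omegaN, ← Complex.exp_add]
    simp
  -- the coefficients
  set b : ℝ := Real.pi / N with hbdef
  set c : ℂ := Complex.exp ((b : ℂ) * Complex.I) with hcdef
  set cb : ℂ := Complex.exp (-(b : ℂ) * Complex.I) with hcbdef
  have hbC : (b : ℂ) = (Real.pi : ℂ) / N := by rw [hbdef]; push_cast; ring
  have hc : c * ωb = cb := by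
    rw [hcdef, hcbdef, hωb, ← Complex.exp_add]
    congr 1
    rw [hbC]
    field_simp
    ring
  -- the symmetry matrix
  set S : Matrix (Fin N) (Fin N) ℂ := parityP N * (clockZ N)ᴴ with hSdef
  have hS : ∀ j k : Fin N, S j k = if j = -k then ωb ^ (k : ℕ) else 0 := by
    intro j k
    rw [hSdef, clockZ, diagonal_conjTranspose, Matrix.mul_diagonal]
    have hcond : (((j : ℕ) + (k : ℕ)) % N = 0) ↔ (j = -k) := by
      rw [← Fin.val_add, show ((j + k : Fin N) : ℕ) = 0 ↔ j + k = 0 by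
        rw [Fin.ext_iff, Fin.val_zero], add_eq_zero_iff_eq_neg]
    simp only [parityP, Matrix.of_apply, Pi.star_apply, hcond]
    rw [hωbdef, ← map_pow]
    split_ifs <;> simp <;> rfl
  -- shiftX in Fin form
  have hX : ∀ j k : Fin N, shiftX N j k = if j = k + 1 then 1 else 0 := by
    intro j k
    have : ((j : ℕ) = ((k : ℕ) + 1) % N) ↔ (j = k + 1) := by
      rw [Fin.ext_iff, Fin.val_add, Fin.val_one', Nat.mod_eq_of_lt (by omega : 1 < N)]
    simp only [shiftX, Matrix.of_apply, this]
  -- product collapse lemmas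
  have hMX : ∀ (M : Matrix (Fin N) (Fin N) ℂ) (j k : Fin N),
      (M * shiftX N) j k = M j (k + 1) := by
    intro M j k
    simp only [Matrix.mul_apply, hX, mul_ite, mul_one, mul_zero]
    rw [Finset.sum_ite_eq' Finset.univ (k + 1) (fun m => M j m)]
    simp
  have hMXt : ∀ (M : Matrix (Fin N) (Fin N) ℂ) (j k : Fin N),
      (M * (shiftX N)ᴴ) j k = M j (k - 1) := by
    intro M j k
    have key : ∀ m : Fin N, (if k = m + 1 then (1 : ℂ) else 0) = if m = k - 1 then 1 else 0 := by
      intro m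
      congr 1
      simp only [eq_iff_iff]
      constructor
      · intro h; rw [h]; abel
      · intro h; rw [h, sub_add_cancel]
    simp only [Matrix.mul_apply, Matrix.conjTranspose_apply, hX, apply_ite (star : ℂ → ℂ),
      star_one, star_zero, key, mul_ite, mul_one, mul_zero]
    rw [Finset.sum_ite_eq' Finset.univ (k - 1) (fun m => M j m)]
    simp
  have hXM : ∀ (M : Matrix (Fin N) (Fin N) ℂ) (j k : Fin N),
      (shiftX N * M) j k = M (j - 1) k := by
    intro M j k
    have key : ∀ m : Fin N, (if j = m + 1 then (1 : ℂ) else 0) = if m = j - 1 then 1 else 0 := by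
      intro m
      congr 1
      simp only [eq_iff_iff]
      constructor
      · intro h; rw [h]; abel
      · intro h; rw [h, sub_add_cancel]
    simp only [Matrix.mul_apply, hX, key, ite_mul, one_mul, zero_mul]
    rw [Finset.sum_ite_eq' Finset.univ (j - 1) (fun m => M m k)]
    simp
  have hXtM : ∀ (M : Matrix (Fin N) (Fin N) ℂ) (j k : Fin N),
      ((shiftX N)ᴴ * M) j k = M (j + 1) k := by
    intro M j k
    simp only [Matrix.mul_apply, Matrix.conjTranspose_apply, hX, apply_ite (star : ℂ → ℂ),
      star_one, star_zero, ite_mul, one_mul, zero_mul]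
    rw [Finset.sum_ite_eq' Finset.univ (j + 1) (fun m => M m k)]
    simp
  -- power shift lemmas
  have hpow1 : ∀ m : Fin N, ωb ^ ((m + 1 : Fin N) : ℕ) = ωb ^ (m : ℕ) * ωb := by
    intro m
    rw [show ((m + 1 : Fin N) : ℕ) = ((m : ℕ) + 1) % N by
      rw [Fin.val_add, Fin.val_one', Nat.mod_eq_of_lt (by omega : 1 < N)],
      pow_val_mod hωbN, pow_succ]
  -- key coefficient identities
  have F1 : ∀ k : Fin N, c * ωb ^ ((k + 1 : Fin N) : ℕ) = cb * ωb ^ (k : ℕ) := by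
    intro k
    rw [hpow1]
    calc c * (ωb ^ (k : ℕ) * ωb) = (c * ωb) * ωb ^ (k : ℕ) := by ring
    _ = cb * ωb ^ (k : ℕ) := by rw [hc]
  have F2 : ∀ k : Fin N, cb * ωb ^ ((k - 1 : Fin N) : ℕ) = c * ωb ^ (k : ℕ) := by
    intro k
    have : ωb ^ (k : ℕ) = ωb ^ ((k - 1 : Fin N) : ℕ) * ωb := by
      conv_lhs => rw [show k = (k - 1) + 1 by rw [sub_add_cancel]]
      exact hpow1 (k - 1)
    rw [this, ← hc]
    ring
  have F3 : ∀ j k : Fin N, j = -k →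
      ω ^ (j : ℕ) + ωb ^ (j : ℕ) = ω ^ (k : ℕ) + ωb ^ (k : ℕ) := by
    intro j k h
    have hjk : j + k = 0 := by rw [h]; abel
    have hmod : ((j : ℕ) + (k : ℕ)) % N = 0 := by
      rw [← Fin.val_add, hjk, Fin.val_zero]
    have h1 : ω ^ (j : ℕ) * ω ^ (k : ℕ) = 1 := by
      rw [← pow_add, ← pow_val_mod hωN, hmod, pow_zero]
    have h1b : ωb ^ (j : ℕ) * ωb ^ (k : ℕ) = 1 := by
      rw [← pow_add, ← pow_val_mod hωbN, hmod, pow_zero]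
    have h2 : ωb ^ (k : ℕ) * ω ^ (k : ℕ) = 1 := by
      rw [← mul_pow, mul_comm ωb ω, hωmul, one_pow]
    have h2b : ω ^ (j : ℕ) * ωb ^ (j : ℕ) = 1 := by
      rw [← mul_pow, hωmul, one_pow]
    have hωk : ω ^ (k : ℕ) ≠ 0 := pow_ne_zero _ (Complex.exp_ne_zero _)
    have hωj : ω ^ (j : ℕ) ≠ 0 := pow_ne_zero _ (Complex.exp_ne_zero _)
    have e1 : ω ^ (j : ℕ) = ωb ^ (k : ℕ) := mul_right_cancel₀ hωk (h1.trans h2.symm)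
    have hωbk : ωb ^ (k : ℕ) ≠ 0 := by
      intro hz
      rw [hz, zero_mul] at h2
      exact zero_ne_one h2
    have h3 : ω ^ (k : ℕ) * ωb ^ (k : ℕ) = 1 := by rw [mul_comm]; exact h2
    have e2 : ωb ^ (j : ℕ) = ω ^ (k : ℕ) := mul_right_cancel₀ hωbk (h1b.trans h3.symm)
    rw [e1, e2, add_comm]
  -- entrywise proof
  ext j k
  simp only [harper, Matrix.mul_add, Matrix.add_mul, Matrix.mul_smul, Matrix.smul_mul,
    Matrix.add_apply, Matrix.smul_apply, smul_eq_mul, ← hSdef, ← hbdef, ← hcdef, ← hcbdef]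
  rw [hMX S j k, hMXt S j k, hXM S j k, hXtM S j k]
  have hZ1 : (S * clockZ N) j k + (S * (clockZ N)ᴴ) j k
      = S j k * (ω ^ (k : ℕ) + ωb ^ (k : ℕ)) := by
    rw [clockZ, diagonal_conjTranspose, Matrix.mul_diagonal, Matrix.mul_diagonal]
    simp only [Pi.star_apply, Function.comp_apply, star_pow, Complex.star_def, ← hωbdef]
    ring
  have hZ2 : ((clockZ N) * S) j k + ((clockZ N)ᴴ * S) j k
      = (ω ^ (j : ℕ) + ωb ^ (j : ℕ)) * S j k := by
    rw [clockZ, diagonal_conjTranspose, Matrix.diagonal_mul, Matrix.diagonal_mul]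
    simp only [Pi.star_apply, Function.comp_apply, star_pow, Complex.star_def, ← hωbdef]
    ring
  rw [hZ1, hZ2, hS, hS, hS, hS, hS]

  -- normalize conditions
  have e1 : (j = -(k + 1)) ↔ (j + 1 = -k) := by
    constructor
    · intro h; rw [h]; abel
    · intro h; have : j = -k - 1 := eq_sub_of_add_eq h; rw [this]; abel
  have e2 : (j = -(k - 1)) ↔ (j - 1 = -k) := by
    constructor
    · intro h; rw [h]; abel
    · intro h; have : j = -k + 1 := eq_add_of_sub_eq h; rw [this]; abel
  rw [if_congr e1 rfl rfl, if_congr e2 rfl rfl]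
  have T1 : (a : ℂ) / 2 * c * (if j + 1 = -k then ωb ^ ((k + 1 : Fin N) : ℕ) else 0)
      = (a : ℂ) / 2 * cb * (if j + 1 = -k then ωb ^ (k : ℕ) else 0) := by
    split_ifs with h
    · linear_combination ((a : ℂ)/2) * F1 k
    · ring
  have T2 : (a : ℂ) / 2 * cb * (if j - 1 = -k then ωb ^ ((k - 1 : Fin N) : ℕ) else 0)
      = (a : ℂ) / 2 * c * (if j - 1 = -k then ωb ^ (k : ℕ) else 0) := by
    split_ifs with h
    · linear_combination ((a : ℂ)/2) * F2 k
    · ring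
  have T3 : (if j = -k then ωb ^ (k : ℕ) else 0) * (ω ^ (k : ℕ) + ωb ^ (k : ℕ))
      = (ω ^ (j : ℕ) + ωb ^ (j : ℕ)) * (if j = -k then ωb ^ (k : ℕ) else 0) := by
    split_ifs with h
    · rw [F3 j k h]; ring
    · ring
  linear_combination T1 + T2 + ((ε : ℂ) / 2) * T3
end

section
/- For every integer k and all real a, ε, the matrix P·Z^(−(2k+1)) commutes with the Harper matrix at b = (2k+1)π/N: (P·Z^(−(2k+1))) · h(a, (2k+1)π/N, ε) = h(a, (2k+1)π/N, ε) · (P·Z^(−(2k+1))). -/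
open Matrix Complex

set_option linter.unusedSectionVars false
set_option linter.unusedVariables false
namespace HarperAux

variable {N : ℕ} [NeZero N]

lemma omegaN_ne_zero (N : ℕ) : omegaN N ≠ 0 := Complex.exp_ne_zero _

lemma omegaN_pow_N (hN : 2 ≤ N) : omegaN N ^ (N : ℤ) = 1 := by
  have hN0 : (N : ℂ) ≠ 0 := Nat.cast_ne_zero.2 (by omega)
  rw [zpow_natCast, omegaN, ← Complex.exp_nat_mul,
    show (N : ℂ) * (2 * (Real.pi : ℂ) * Complex.I / N) = 2 * (Real.pi : ℂ) * Complex.I by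
      field_simp]
  exact Complex.exp_two_pi_mul_I

lemma omegaN_zpow_congr (hN : 2 ≤ N) {x y : ℤ} (h : x ≡ y [ZMOD (N : ℤ)]) :
    omegaN N ^ x = omegaN N ^ y := by
  obtain ⟨c, hc⟩ := h.dvd
  rw [show y = x + (N : ℤ) * c by linarith, zpow_add₀ (omegaN_ne_zero N), _root_.zpow_mul,
    omegaN_pow_N hN, _root_.one_zpow, mul_one]

lemma valInt_add (p q : Fin N) :
    (((p + q : Fin N) : ℕ) : ℤ) ≡ ((p : ℕ) : ℤ) + ((q : ℕ) : ℤ) [ZMOD (N : ℤ)] := by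
  have h : ((p + q : Fin N) : ℕ) = ((p : ℕ) + (q : ℕ)) % N := Fin.val_add p q
  rw [h]
  push_cast
  exact (Int.emod_emod_of_dvd _ dvd_rfl)

lemma valInt_neg (p : Fin N) :
    (((-p : Fin N) : ℕ) : ℤ) ≡ -((p : ℕ) : ℤ) [ZMOD (N : ℤ)] := by
  have h : ((p : ℕ) + ((-p : Fin N) : ℕ)) % N = 0 := by
    have h2 := congrArg Fin.val (add_neg_cancel p)
    rw [Fin.val_add, Fin.val_zero] at h2
    exact h2
  have hdvd : (N : ℤ) ∣ ((p : ℕ) : ℤ) + (((-p : Fin N) : ℕ) : ℤ) := by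
    exact_mod_cast Int.natCast_dvd_natCast.2 (Nat.dvd_of_mod_eq_zero h)
  refine Int.ModEq.symm (Int.modEq_iff_dvd.2 ?_)
  rw [show (((-p : Fin N) : ℕ) : ℤ) - (-((p : ℕ) : ℤ)) = ((p : ℕ) : ℤ) + (((-p : Fin N) : ℕ) : ℤ) by ring]
  exact hdvd


lemma val_one_of (hN : 2 ≤ N) : ((1 : Fin N) : ℕ) = 1 := by
  rw [Fin.val_one', Nat.mod_eq_of_lt (by omega)]

lemma parity_cond (hN : 2 ≤ N) (p q : Fin N) :
    (((p : ℕ) + (q : ℕ)) % N = 0) ↔ q = -p := by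
  constructor
  · intro h
    have hpq : p + q = 0 := by
      apply Fin.ext
      rw [Fin.val_add, Fin.val_zero]
      exact h
    exact eq_neg_of_add_eq_zero_right hpq
  · rintro rfl
    have h2 := congrArg Fin.val (add_neg_cancel p)
    rw [Fin.val_add, Fin.val_zero] at h2
    exact h2

lemma shift_cond (hN : 2 ≤ N) (p q : Fin N) :
    ((p : ℕ) = ((q : ℕ) + 1) % N) ↔ p = q + 1 := by
  rw [Fin.ext_iff, Fin.val_add, val_one_of hN]

lemma parityP_apply (hN : 2 ≤ N) (p q : Fin N) :
    parityP N p q = if q = -p then (1 : ℂ) else 0 := by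
  simp only [parityP, Matrix.of_apply, parity_cond hN]

lemma shiftX_apply' (hN : 2 ≤ N) (p q : Fin N) :
    shiftX N p q = if p = q + 1 then (1 : ℂ) else 0 := by
  simp only [shiftX, Matrix.of_apply, shift_cond hN]

lemma shiftXH_apply (hN : 2 ≤ N) (p q : Fin N) :
    (shiftX N)ᴴ p q = if q = p + 1 then (1 : ℂ) else 0 := by
  rw [Matrix.conjTranspose_apply, shiftX_apply' hN]
  split <;> simp

lemma P_mul_apply (hN : 2 ≤ N) (A : Matrix (Fin N) (Fin N) ℂ) (j l : Fin N) :
    (parityP N * A) j l = A (-j) l := by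
  simp [Matrix.mul_apply, parityP_apply hN, ite_mul]

lemma mul_X_apply (hN : 2 ≤ N) (A : Matrix (Fin N) (Fin N) ℂ) (j l : Fin N) :
    (A * shiftX N) j l = A j (l + 1) := by
  simp [Matrix.mul_apply, shiftX_apply' hN, mul_ite]

lemma XH_mul_apply (hN : 2 ≤ N) (A : Matrix (Fin N) (Fin N) ℂ) (j l : Fin N) :
    ((shiftX N)ᴴ * A) j l = A (j + 1) l := by
  simp [Matrix.mul_apply, shiftX_apply' hN, apply_ite (starRingEnd ℂ), ite_mul]

lemma X_mul_apply (hN : 2 ≤ N) (A : Matrix (Fin N) (Fin N) ℂ) (j l : Fin N) :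
    (shiftX N * A) j l = A (j - 1) l := by
  have hcond : ∀ r : Fin N, (j = r + 1) ↔ (r = j - 1) := by
    intro r
    rw [eq_sub_iff_add_eq]
    exact eq_comm
  simp [Matrix.mul_apply, shiftX_apply' hN, hcond, ite_mul]

lemma mul_XH_apply (hN : 2 ≤ N) (A : Matrix (Fin N) (Fin N) ℂ) (j l : Fin N) :
    (A * (shiftX N)ᴴ) j l = A j (l - 1) := by
  have hcond : ∀ r : Fin N, (l = r + 1) ↔ (r = l - 1) := by
    intro r
    rw [eq_sub_iff_add_eq]
    exact eq_comm
  simp [Matrix.mul_apply, shiftX_apply' hN, apply_ite (starRingEnd ℂ), hcond, mul_ite]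


noncomputable def Ddiag (N : ℕ) (m : ℤ) : Matrix (Fin N) (Fin N) ℂ :=
  Matrix.diagonal fun j => omegaN N ^ (m * ((j : ℕ) : ℤ))

lemma clockZ_det_isUnit : IsUnit (clockZ N).det := by
  rw [clockZ, Matrix.det_diagonal]
  exact (Finset.prod_ne_zero_iff.2 fun j _ => pow_ne_zero _ (omegaN_ne_zero N)).isUnit

lemma clockZ_zpow (m : ℤ) : clockZ N ^ m = Ddiag N m := by
  have hZinv : (clockZ N)⁻¹ = Matrix.diagonal (fun j : Fin N => omegaN N ^ (-((j : ℕ) : ℤ))) := by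
    apply Matrix.inv_eq_right_inv
    rw [clockZ, Matrix.diagonal_mul_diagonal, ← Matrix.diagonal_one]
    have hfun : (fun j : Fin N => omegaN N ^ (j : ℕ) * omegaN N ^ (-((j : ℕ) : ℤ)))
        = fun _ : Fin N => (1 : ℂ) := by
      funext j
      rw [← zpow_natCast (omegaN N) (j : ℕ), ← zpow_add₀ (omegaN_ne_zero N), add_neg_cancel,
        zpow_zero]
    rw [hfun]
  induction m using Int.induction_on with
  | zero =>
      rw [zpow_zero, Ddiag, ← Matrix.diagonal_one]
      have hfun : (fun j : Fin N => omegaN N ^ ((0 : ℤ) * ((j : ℕ) : ℤ)))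
          = fun _ : Fin N => (1 : ℂ) := by
        funext j
        rw [zero_mul, zpow_zero]
      rw [hfun]
  | succ i ih =>
      rw [Matrix.zpow_add_one clockZ_det_isUnit, ih, Ddiag, Ddiag, clockZ,
        Matrix.diagonal_mul_diagonal]
      have hfun : (fun j : Fin N => omegaN N ^ ((i : ℤ) * ((j : ℕ) : ℤ)) * omegaN N ^ (j : ℕ))
          = fun j : Fin N => omegaN N ^ (((i : ℤ) + 1) * ((j : ℕ) : ℤ)) := by
        funext j
        rw [← zpow_natCast (omegaN N) (j : ℕ), ← zpow_add₀ (omegaN_ne_zero N)]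
        congr 1
        ring
      rw [hfun]
  | pred i ih =>
      rw [show (-(i : ℤ) - 1) = (-(i : ℤ)) - 1 by ring, Matrix.zpow_sub_one clockZ_det_isUnit,
        ih, hZinv, Ddiag, Ddiag, Matrix.diagonal_mul_diagonal]
      have hfun : (fun j : Fin N => omegaN N ^ ((-(i : ℤ)) * ((j : ℕ) : ℤ)) * omegaN N ^ (-((j : ℕ) : ℤ)))
          = fun j : Fin N => omegaN N ^ ((-(i : ℤ) - 1) * ((j : ℕ) : ℤ)) := by
        funext j
        rw [← zpow_add₀ (omegaN_ne_zero N)]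
        congr 1
        ring
      rw [hfun]

lemma omegaN_star (N : ℕ) : star (omegaN N) = (omegaN N)⁻¹ := by
  rw [omegaN, ← Complex.exp_neg]
  rw [show star (Complex.exp (2 * (Real.pi : ℂ) * Complex.I / N))
      = Complex.exp (starRingEnd ℂ (2 * (Real.pi : ℂ) * Complex.I / N)) from
    (Complex.exp_conj _).symm]
  congr 1
  simp only [map_div₀, _root_.map_mul, Complex.conj_I, Complex.conj_ofReal, map_ofNat, map_natCast]
  ring

lemma M_apply (hN : 2 ≤ N) (m : ℤ) (j l : Fin N) :
    (parityP N * Ddiag N m) j l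
      = if l = -j then omegaN N ^ (m * (((-j : Fin N) : ℕ) : ℤ)) else 0 := by
  rw [P_mul_apply hN, Ddiag]
  rcases eq_or_ne l (-j) with rfl | h
  · rw [Matrix.diagonal_apply_eq, if_pos rfl]
  · rw [Matrix.diagonal_apply_ne _ (fun hc => h hc.symm), if_neg h]

lemma valInt_succ (hN : 2 ≤ N) (p : Fin N) :
    (((p + 1 : Fin N) : ℕ) : ℤ) ≡ ((p : ℕ) : ℤ) + 1 [ZMOD (N : ℤ)] := by
  have h := valInt_add p 1
  rwa [val_one_of hN, Nat.cast_one] at h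

lemma relA (hN : 2 ≤ N) (m : ℤ) :
    (parityP N * Ddiag N m) * shiftX N
      = omegaN N ^ m • ((shiftX N)ᴴ * (parityP N * Ddiag N m)) := by
  ext j l
  rw [mul_X_apply hN, Matrix.smul_apply, XH_mul_apply hN, M_apply hN, M_apply hN]
  rcases eq_or_ne l (-(j + 1)) with rfl | h
  · rw [if_pos (show -(j + 1) + 1 = -j by abel), if_pos rfl, smul_eq_mul,
      ← zpow_add₀ (omegaN_ne_zero N)]
    apply omegaN_zpow_congr hN
    have h1 := valInt_succ hN (-(j + 1))
    rw [show -(j + 1) + 1 = -j by abel] at h1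
    calc (m * (((-j : Fin N) : ℕ) : ℤ)) ≡ m * ((((-(j + 1) : Fin N)) : ℕ) + 1) [ZMOD (N : ℤ)] :=
          h1.mul_left m
      _ = m + m * (((-(j + 1) : Fin N) : ℕ) : ℤ) := by ring
  · rw [if_neg h, if_neg, smul_zero]
    intro hc
    apply h
    rw [show (-(j + 1) : Fin N) = -j - 1 by abel]
    exact eq_sub_of_add_eq hc

lemma relB (hN : 2 ≤ N) (m : ℤ) :
    (parityP N * Ddiag N m) * (shiftX N)ᴴ
      = omegaN N ^ (-m) • (shiftX N * (parityP N * Ddiag N m)) := by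
  ext j l
  rw [mul_XH_apply hN, Matrix.smul_apply, X_mul_apply hN, M_apply hN, M_apply hN]
  rcases eq_or_ne l (-(j - 1)) with rfl | h
  · rw [if_pos (show -(j - 1) - 1 = -j by abel), if_pos rfl, smul_eq_mul,
      ← zpow_add₀ (omegaN_ne_zero N)]
    apply omegaN_zpow_congr hN
    have h1 := valInt_succ hN (-j)
    rw [show -j + 1 = -(j - 1) by abel] at h1
    calc (m * (((-j : Fin N) : ℕ) : ℤ))
        ≡ m * (((((-(j - 1) : Fin N)) : ℕ) : ℤ) - 1) [ZMOD (N : ℤ)] := by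
          have h2 := (h1.symm.mul_left m)
          have h3 : m * ((((-j : Fin N) : ℕ) : ℤ) + 1) - m
              = m * (((-j : Fin N) : ℕ) : ℤ) := by ring
          calc (m * (((-j : Fin N) : ℕ) : ℤ))
              = m * ((((-j : Fin N) : ℕ) : ℤ) + 1) - m := by ring
            _ ≡ m * ((((-(j - 1) : Fin N) : ℕ) : ℤ)) - m [ZMOD (N : ℤ)] := h2.sub_right m
            _ = m * (((((-(j - 1) : Fin N)) : ℕ) : ℤ) - 1) + (m - m) := by ring
            _ = m * (((((-(j - 1) : Fin N)) : ℕ) : ℤ) - 1) := by ring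
      _ = -m + m * ((((-(j - 1) : Fin N)) : ℕ) : ℤ) := by ring
  · rw [if_neg h, if_neg, smul_zero]
    intro hc
    apply h
    rw [show (-(j - 1) : Fin N) = -j + 1 by abel]
    exact eq_add_of_sub_eq hc

lemma relC (hN : 2 ≤ N) (m : ℤ) :
    (parityP N * Ddiag N m) * clockZ N = (clockZ N)ᴴ * (parityP N * Ddiag N m) := by
  ext j l
  rw [clockZ, Matrix.diagonal_conjTranspose, Matrix.mul_diagonal, Matrix.diagonal_mul,
    M_apply hN]
  rcases eq_or_ne l (-j) with rfl | h
  · rw [if_pos rfl, Pi.star_apply, star_pow, omegaN_star, inv_pow,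
      ← zpow_natCast (omegaN N) ((j : ℕ)), ← _root_.zpow_neg, ← zpow_natCast (omegaN N) (((-j : Fin N) : ℕ)),
      ← zpow_add₀ (omegaN_ne_zero N), ← zpow_add₀ (omegaN_ne_zero N)]
    apply omegaN_zpow_congr hN
    have h1 := valInt_neg j
    calc m * (((-j : Fin N) : ℕ) : ℤ) + (((-j : Fin N) : ℕ) : ℤ)
        ≡ m * (((-j : Fin N) : ℕ) : ℤ) + (-((j : ℕ) : ℤ)) [ZMOD (N : ℤ)] :=
          (h1.add_left _)
      _ = -((j : ℕ) : ℤ) + m * (((-j : Fin N) : ℕ) : ℤ) := by ring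
  · rw [if_neg h, zero_mul, mul_zero]

lemma relD (hN : 2 ≤ N) (m : ℤ) :
    (parityP N * Ddiag N m) * (clockZ N)ᴴ = clockZ N * (parityP N * Ddiag N m) := by
  ext j l
  rw [clockZ, Matrix.diagonal_conjTranspose, Matrix.mul_diagonal, Matrix.diagonal_mul,
    M_apply hN]
  rcases eq_or_ne l (-j) with rfl | h
  · rw [if_pos rfl, Pi.star_apply, star_pow, omegaN_star, inv_pow,
      ← zpow_natCast (omegaN N) (((-j : Fin N) : ℕ)), ← _root_.zpow_neg,
      ← zpow_natCast (omegaN N) ((j : ℕ)),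
      ← zpow_add₀ (omegaN_ne_zero N), ← zpow_add₀ (omegaN_ne_zero N)]
    apply omegaN_zpow_congr hN
    have h1 := (valInt_neg j)
    calc m * (((-j : Fin N) : ℕ) : ℤ) + -(((-j : Fin N) : ℕ) : ℤ)
        ≡ m * (((-j : Fin N) : ℕ) : ℤ) + -(-((j : ℕ) : ℤ)) [ZMOD (N : ℤ)] :=
          (h1.neg.add_left _)
      _ = ((j : ℕ) : ℤ) + m * (((-j : Fin N) : ℕ) : ℤ) := by ring
  · rw [if_neg h, zero_mul, mul_zero]

lemma omegaN_zpow_exp (N : ℕ) (n : ℤ) :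
    omegaN N ^ n = Complex.exp ((n : ℂ) * (2 * (Real.pi : ℂ) * Complex.I / N)) :=
  (Complex.exp_int_mul _ n).symm

end HarperAux


set_option maxHeartbeats 1000000 in
/-- The matrix `P·Z^(−(2k+1))` commutes with the Harper matrix at `b = (2k+1)π/N`. -/
theorem parity_clock_odd_commutes_harper (N : ℕ) (hN : 2 ≤ N) (k : ℤ) (a ε : ℝ) :
    (parityP N * (clockZ N) ^ (-(2 * k + 1))) * harper N a ((2 * (k : ℝ) + 1) * Real.pi / N) ε
      = harper N a ((2 * (k : ℝ) + 1) * Real.pi / N) ε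
          * (parityP N * (clockZ N) ^ (-(2 * k + 1))) := by
  haveI : NeZero N := ⟨by omega⟩
  have hNC : (N : ℂ) ≠ 0 := Nat.cast_ne_zero.2 (by omega)
  rw [HarperAux.clockZ_zpow]
  set b : ℝ := (2 * (k : ℝ) + 1) * Real.pi / N with hb
  have hcb : (b : ℂ) = (2 * (k : ℂ) + 1) * (Real.pi : ℂ) / N := by
    rw [hb]; push_cast; ring
  simp only [harper, Matrix.add_mul, Matrix.mul_add, Matrix.mul_smul, Matrix.smul_mul]
  rw [HarperAux.relA hN, HarperAux.relB hN, HarperAux.relC hN, HarperAux.relD hN,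
    smul_smul, smul_smul]
  have hA : (↑a / 2 * Complex.exp ((b : ℂ) * Complex.I)) * omegaN N ^ (-(2 * k + 1))
      = ↑a / 2 * Complex.exp (-(b : ℂ) * Complex.I) := by
    rw [mul_assoc]
    congr 1
    rw [HarperAux.omegaN_zpow_exp, ← Complex.exp_add]
    congr 1
    rw [hcb]
    push_cast
    field_simp
    ring
  have hB : (↑a / 2 * Complex.exp (-(b : ℂ) * Complex.I)) * omegaN N ^ (-(-(2 * k + 1)))
      = ↑a / 2 * Complex.exp ((b : ℂ) * Complex.I) := by
    rw [mul_assoc]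
    congr 1
    rw [HarperAux.omegaN_zpow_exp, ← Complex.exp_add]
    congr 1
    rw [hcb]
    push_cast
    field_simp
    ring
  rw [hA, hB]
  abel
end

section
/- For all real a and ε, conjugation by the discrete Fourier transform matrix exchanges the kinetic and potential coefficients of the Harper matrix at b = 0: Q · h(a, 0, ε) · Qᴴ = h(ε, 0, a); consequently the spectrum (set of eigenvalues in ℂ) of h(a, 0, ε) equals the spectrum of h(ε, 0, a). -/
open Matrix Complex

section aux
variable {N : ℕ}

lemma omegaN_prim (hN : 2 ≤ N) : IsPrimitiveRoot (omegaN N) N :=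
  Complex.isPrimitiveRoot_exp N (by omega)

lemma omegaN_pow_N (hN : 2 ≤ N) : omegaN N ^ N = 1 := (omegaN_prim hN).pow_eq_one

lemma omegaN_ne_zero : omegaN N ≠ 0 := Complex.exp_ne_zero _

lemma conj_omegaN : (starRingEnd ℂ) (omegaN N) = (omegaN N)⁻¹ := by
  rw [omegaN, ← Complex.exp_conj, ← Complex.exp_neg]
  congr 1
  rw [map_div₀]
  simp only [_root_.map_mul, Complex.conj_I, Complex.conj_ofReal, map_ofNat, map_natCast]
  ring

lemma omegaN_pow_mod (hN : 2 ≤ N) (m : ℕ) : omegaN N ^ (m % N) = omegaN N ^ m := by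
  conv_rhs => rw [← Nat.mod_add_div m N]
  rw [pow_add, pow_mul, omegaN_pow_N hN, one_pow, mul_one]

lemma key_sum (hN : 2 ≤ N) (j l : Fin N) :
    ∑ k : Fin N, omegaN N ^ ((j : ℕ) * (k : ℕ)) * (starRingEnd ℂ) (omegaN N ^ ((l : ℕ) * (k : ℕ)))
      = if j = l then (N : ℂ) else 0 := by
  have hω : omegaN N ≠ 0 := omegaN_ne_zero
  set x : ℂ := omegaN N ^ (j : ℕ) * (omegaN N ^ (l : ℕ))⁻¹ with hx
  have hterm : ∀ k : Fin N,
      omegaN N ^ ((j : ℕ) * (k : ℕ)) * (starRingEnd ℂ) (omegaN N ^ ((l : ℕ) * (k : ℕ)))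
        = x ^ (k : ℕ) := by
    intro k
    rw [map_pow, conj_omegaN, pow_mul, pow_mul, inv_pow, ← mul_pow, hx]
  simp only [hterm]
  rw [Fin.sum_univ_eq_sum_range (fun k => x ^ k)]
  by_cases h : j = l
  · subst h
    simp [hx, mul_inv_cancel₀ (pow_ne_zero _ hω)]
  · have hx1 : x ≠ 1 := by
      intro hcon
      apply h
      have : omegaN N ^ (j : ℕ) = omegaN N ^ (l : ℕ) := by
        rw [hx, mul_inv_eq_one₀ (pow_ne_zero _ hω)] at hcon
        exact hcon
      exact Fin.ext ((omegaN_prim hN).pow_inj j.isLt l.isLt this)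
    have hxN : x ^ N = 1 := by
      rw [hx, mul_pow, ← pow_mul, inv_pow, ← pow_mul, mul_comm (j:ℕ), mul_comm (l:ℕ),
        pow_mul, pow_mul, omegaN_pow_N hN, one_pow, one_pow, inv_one, one_mul]
    rw [geom_sum_eq hx1, hxN, if_neg h]
    simp

lemma sqrtN_ne_zero (hN : 2 ≤ N) : ((Real.sqrt N : ℝ) : ℂ) ≠ 0 := by
  have : (0:ℝ) < Real.sqrt N := Real.sqrt_pos.mpr (by positivity)
  exact_mod_cast this.ne'

lemma sqrtN_mul_self (hN : 2 ≤ N) :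
    ((Real.sqrt N : ℝ) : ℂ) * ((Real.sqrt N : ℝ) : ℂ) = (N : ℂ) := by
  rw [← Complex.ofReal_mul, Real.mul_self_sqrt (by positivity)]
  norm_cast

variable [NeZero N]

lemma shiftX_eq (hN : 2 ≤ N) :
    shiftX N = Matrix.of fun j k => if j = k + 1 then 1 else 0 := by
  ext j k
  simp only [shiftX, Matrix.of_apply]
  congr 1
  rw [eq_iff_iff, Fin.ext_iff, Fin.add_def, Fin.val_one', Nat.mod_eq_of_lt (by omega : 1 < N)]

lemma dft_conjTranspose_apply (k l : Fin N) :
    (dftQ N)ᴴ k l = (starRingEnd ℂ) (omegaN N ^ ((l : ℕ) * (k : ℕ))) / (Real.sqrt N : ℂ) := by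
  simp [dftQ, Matrix.conjTranspose_apply, map_div₀, Complex.conj_ofReal]

lemma dft_mul_conjTranspose (hN : 2 ≤ N) : dftQ N * (dftQ N)ᴴ = 1 := by
  ext j l
  rw [Matrix.mul_apply]
  simp only [dftQ, Matrix.conjTranspose_apply, Matrix.of_apply, RCLike.star_def, map_div₀, Complex.conj_ofReal]
  have : ∀ k : Fin N,
      omegaN N ^ ((j:ℕ) * (k:ℕ)) / (Real.sqrt N : ℂ) *
        ((starRingEnd ℂ) (omegaN N ^ ((l:ℕ) * (k:ℕ))) / (Real.sqrt N : ℂ))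
      = (omegaN N ^ ((j:ℕ) * (k:ℕ)) * (starRingEnd ℂ) (omegaN N ^ ((l:ℕ) * (k:ℕ)))) / (N:ℂ) := by
    intro k
    rw [div_mul_div_comm, sqrtN_mul_self hN]
  rw [Finset.sum_congr rfl (fun k _ => this k), ← Finset.sum_div, key_sum hN j l]
  have hNne : (N:ℂ) ≠ 0 := by exact_mod_cast (by omega : N ≠ 0)
  by_cases h : j = l <;> simp [h, Matrix.one_apply, div_self hNne]

lemma dftQ_mul_shiftX (hN : 2 ≤ N) (j k : Fin N) :
    (dftQ N * shiftX N) j k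
      = omegaN N ^ ((j:ℕ) * ((k:ℕ) + 1)) / (Real.sqrt N : ℂ) := by
  rw [Matrix.mul_apply, shiftX_eq hN]
  simp only [dftQ, Matrix.of_apply, mul_ite, mul_one, mul_zero]
  rw [Finset.sum_ite_eq' Finset.univ (k+1)
    (fun m => omegaN N ^ ((j:ℕ) * (m:ℕ)) / (Real.sqrt N : ℂ))]
  simp only [Finset.mem_univ, if_true]
  congr 1
  rw [Fin.add_def, Fin.val_one', Nat.mod_eq_of_lt (by omega : 1 < N)]
  rw [mul_comm (j:ℕ), pow_mul, omegaN_pow_mod hN, ← pow_mul, mul_comm]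

lemma QXQ (hN : 2 ≤ N) : dftQ N * shiftX N * (dftQ N)ᴴ = clockZ N := by
  ext j l
  rw [Matrix.mul_apply]
  simp only [dftQ_mul_shiftX hN, dft_conjTranspose_apply]
  have : ∀ k : Fin N,
      omegaN N ^ ((j:ℕ) * ((k:ℕ)+1)) / (Real.sqrt N : ℂ) *
        ((starRingEnd ℂ) (omegaN N ^ ((l:ℕ) * (k:ℕ))) / (Real.sqrt N : ℂ))
      = omegaN N ^ (j:ℕ) *
        (omegaN N ^ ((j:ℕ) * (k:ℕ)) * (starRingEnd ℂ) (omegaN N ^ ((l:ℕ) * (k:ℕ)))) / (N:ℂ) := by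
    intro k
    rw [div_mul_div_comm, sqrtN_mul_self hN, Nat.mul_add, mul_one, pow_add]
    ring
  simp only [this, ← Finset.sum_div, ← Finset.mul_sum, key_sum hN j l]
  have hNne : (N:ℂ) ≠ 0 := by exact_mod_cast (by omega : N ≠ 0)
  by_cases h : j = l <;>
    simp [h, clockZ, Matrix.diagonal_apply, mul_div_assoc, div_self hNne]

lemma dftQ_mul_clockZ (hN : 2 ≤ N) (j k : Fin N) :
    (dftQ N * clockZ N) j k
      = omegaN N ^ (((j:ℕ) + 1) * (k:ℕ)) / (Real.sqrt N : ℂ) := by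
  rw [Matrix.mul_apply]
  simp only [clockZ, Matrix.diagonal_apply, mul_ite, mul_zero]
  rw [Finset.sum_ite_eq' Finset.univ k
    (fun m => dftQ N j m * omegaN N ^ (m:ℕ))]
  simp only [Finset.mem_univ, if_true, dftQ, Matrix.of_apply]
  rw [div_mul_eq_mul_div, ← pow_add, Nat.add_mul, one_mul]

lemma QZQ (hN : 2 ≤ N) : dftQ N * clockZ N * (dftQ N)ᴴ = (shiftX N)ᴴ := by
  ext j l
  rw [Matrix.mul_apply]
  simp only [dftQ_mul_clockZ hN, dft_conjTranspose_apply]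
  have hexp : ∀ k : Fin N, omegaN N ^ (((j:ℕ)+1) * (k:ℕ))
      = omegaN N ^ (((j+1 : Fin N) : ℕ) * (k:ℕ)) := by
    intro k
    rw [Fin.add_def, Fin.val_one', Nat.mod_eq_of_lt (by omega : 1 < N)]
    rw [pow_mul, pow_mul, omegaN_pow_mod hN]
  have : ∀ k : Fin N,
      omegaN N ^ (((j:ℕ)+1) * (k:ℕ)) / (Real.sqrt N : ℂ) *
        ((starRingEnd ℂ) (omegaN N ^ ((l:ℕ) * (k:ℕ))) / (Real.sqrt N : ℂ))
      = (omegaN N ^ (((j+1 : Fin N):ℕ) * (k:ℕ)) *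
          (starRingEnd ℂ) (omegaN N ^ ((l:ℕ) * (k:ℕ)))) / (N:ℂ) := by
    intro k
    rw [div_mul_div_comm, sqrtN_mul_self hN, hexp k]
  simp only [this, ← Finset.sum_div, key_sum hN (j+1) l]
  have hNne : (N:ℂ) ≠ 0 := by exact_mod_cast (by omega : N ≠ 0)
  rw [Matrix.conjTranspose_apply, shiftX_eq hN]
  by_cases h : j + 1 = l <;> simp [h, Ne.symm, eq_comm, div_self hNne]

lemma QXHQ (hN : 2 ≤ N) : dftQ N * (shiftX N)ᴴ * (dftQ N)ᴴ = (clockZ N)ᴴ := by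
  have := congrArg Matrix.conjTranspose (QXQ hN)
  simpa only [Matrix.conjTranspose_mul, Matrix.conjTranspose_conjTranspose,
    Matrix.mul_assoc] using this

lemma QZHQ (hN : 2 ≤ N) : dftQ N * (clockZ N)ᴴ * (dftQ N)ᴴ = shiftX N := by
  have := congrArg Matrix.conjTranspose (QZQ hN)
  simpa only [Matrix.conjTranspose_mul, Matrix.conjTranspose_conjTranspose,
    Matrix.mul_assoc] using this

end aux

/-- Conjugation by the discrete Fourier transform matrix exchanges the kinetic and
potential coefficients of the Harper matrix at `b = 0`, and hence the spectra of
`h(a, 0, ε)` and `h(ε, 0, a)` agree. -/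
theorem dft_conj_harper (N : ℕ) (hN : 2 ≤ N) (a ε : ℝ) :
    dftQ N * harper N a 0 ε * (dftQ N)ᴴ = harper N ε 0 a
      ∧ spectrum ℂ (harper N a 0 ε) = spectrum ℂ (harper N ε 0 a) := by
  haveI : NeZero N := ⟨by omega⟩
  have h1 : dftQ N * harper N a 0 ε * (dftQ N)ᴴ = harper N ε 0 a := by
    simp only [harper, Complex.ofReal_zero, zero_mul, neg_zero, Complex.exp_zero, mul_one]
    simp only [Matrix.mul_add, Matrix.add_mul, Matrix.mul_smul, Matrix.smul_mul, smul_add]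
    rw [QXQ hN, QXHQ hN, QZQ hN, QZHQ hN]
    abel
  refine ⟨h1, ?_⟩
  have hQ1 : dftQ N * (dftQ N)ᴴ = 1 := dft_mul_conjTranspose hN
  have hQ1' : (dftQ N)ᴴ * dftQ N = 1 := mul_eq_one_comm.mp hQ1
  let u : (Matrix (Fin N) (Fin N) ℂ)ˣ := ⟨dftQ N, (dftQ N)ᴴ, hQ1, hQ1'⟩
  have h2 : harper N ε 0 a
      = (u : Matrix (Fin N) (Fin N) ℂ) * harper N a 0 ε
        * ((u⁻¹ : (Matrix (Fin N) (Fin N) ℂ)ˣ) : Matrix (Fin N) (Fin N) ℂ) := by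
    rw [← h1]; rfl
  rw [h2, spectrum.units_conjugate]
end

section
/- The characteristic polynomial of twice the Harper matrix depends on the parameter b only through an additive term −2cos(Nb): for all complex x and all real b, ε, det(x·I − 2·h(1, b, ε)) = det(x·I − 2·h(1, 0, ε)) + 2 − 2·cos(N·b). -/
open Matrix Complex

namespace HCP

noncomputable def dd (N : ℕ) (x : ℂ) (ε : ℝ) (j : Fin N) : ℂ :=
  x - (ε : ℂ) * (omegaN N ^ (j : ℕ) + starRingEnd ℂ (omegaN N ^ (j : ℕ)))

lemma entry (N : ℕ) (x : ℂ) (ε b : ℝ) (j k : Fin N) :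
    (x • (1 : Matrix (Fin N) (Fin N) ℂ) - (2 : ℂ) • harper N 1 b ε) j k
      = (if j = k then dd N x ε j else 0)
        - Complex.exp ((b : ℂ) * Complex.I) * (if (j : ℕ) = ((k : ℕ) + 1) % N then 1 else 0)
        - Complex.exp (-(b : ℂ) * Complex.I) * (if (k : ℕ) = ((j : ℕ) + 1) % N then 1 else 0) := by
  simp only [Matrix.sub_apply, Matrix.smul_apply, Matrix.one_apply, Matrix.add_apply,
    harper, shiftX, clockZ, Matrix.conjTranspose_apply, Matrix.of_apply,
    Matrix.diagonal_apply, dd, smul_eq_mul]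
  split_ifs <;> (try subst_vars) <;> simp only [star_zero, star_one, star_pow,
    starRingEnd_apply, Complex.ofReal_one] <;> first | ring1 | contradiction

variable (n : ℕ) (x : ℂ) (ε b : ℝ)

noncomputable def Amat : Matrix (Fin (n+2)) (Fin (n+2)) ℂ :=
  x • (1 : Matrix (Fin (n+2)) (Fin (n+2)) ℂ) - (2:ℂ) • harper (n+2) 1 0 ε

lemma Amat_apply (j k : Fin (n+2)) :
    Amat n x ε j k
      = (if j = k then dd (n+2) x ε j else 0)
        - (if (j : ℕ) = ((k : ℕ) + 1) % (n+2) then 1 else 0)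
        - (if (k : ℕ) = ((j : ℕ) + 1) % (n+2) then 1 else 0) := by
  have := entry (n+2) x ε 0 j k
  unfold Amat
  simpa using this

def ee1 : Fin (n+2) → ℂ := fun k => if k = Fin.last (n+1) then 1 else 0
def ee0 : Fin (n+2) → ℂ := fun k => if k = 0 then 1 else 0
noncomputable def tC : ℂ := Complex.exp ((((n:ℕ):ℂ)+2)*(b:ℂ)*Complex.I)
noncomputable def sC : ℂ := Complex.exp (-((((n:ℕ):ℂ)+2)*(b:ℂ))*Complex.I)

lemma last_ne_zero' : (Fin.last (n+1)) ≠ (0 : Fin (n+2)) := by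
  simp [Fin.ext_iff]

noncomputable def Mp : Matrix (Fin (n+2)) (Fin (n+2)) ℂ :=
  updateRow
    (updateRow (Amat n x ε) 0 (fun k => Amat n x ε 0 k + (1 - tC n b) * ee1 n k))
    (Fin.last (n+1)) (fun k => Amat n x ε (Fin.last (n+1)) k + (1 - sC n b) * ee0 n k)

lemma Mp_apply (j k : Fin (n+2)) :
    Mp n x ε b j k
      = Amat n x ε j k
        + (1 - tC n b) * (if j = 0 ∧ k = Fin.last (n+1) then 1 else 0)
        + (1 - sC n b) * (if j = Fin.last (n+1) ∧ k = 0 then 1 else 0) := by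
  by_cases hj1 : j = Fin.last (n+1)
  · simp [Mp, hj1, updateRow_apply, last_ne_zero', ee0, ee1]
  · by_cases hj0 : j = 0
    · simp [Mp, hj0, hj1, updateRow_apply, (last_ne_zero' n).symm, ee0, ee1,
        Ne.symm (last_ne_zero' n)]
    · simp [Mp, updateRow_apply, hj0, hj1, ee0, ee1]


lemma E1 (j k : Fin (n+2)) :
    Complex.exp (-(b:ℂ)*Complex.I*(j:ℕ))
        * (Complex.exp ((b:ℂ)*Complex.I) * (if (j:ℕ) = ((k:ℕ)+1) % (n+2) then 1 else 0))
      = ((if (j:ℕ) = ((k:ℕ)+1) % (n+2) then 1 else 0)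
          - (1 - Complex.exp ((((n:ℕ):ℂ)+2)*(b:ℂ)*Complex.I))
            * (if j = 0 ∧ k = Fin.last (n+1) then (1:ℂ) else 0))
        * Complex.exp (-(b:ℂ)*Complex.I*(k:ℕ)) := by
  by_cases hk : (k:ℕ) = n+1
  · have hm : ((k:ℕ)+1) % (n+2) = 0 := by
      have h2 : (k:ℕ)+1 = n+2 := by omega
      rw [h2, Nat.mod_self]
    by_cases hj : (j:ℕ) = 0
    · have hj0 : j = 0 := by exact Fin.ext (by simpa using hj)
      have hkl : k = Fin.last (n+1) := by exact Fin.ext (by simpa using hk)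
      rw [hm, if_pos hj, if_pos ⟨hj0, hkl⟩]
      rw [hj, hk, mul_one, mul_one, ← Complex.exp_add,
        show ((1:ℂ) - (1 - Complex.exp ((((n:ℕ):ℂ)+2)*(b:ℂ)*Complex.I)))
            = Complex.exp ((((n:ℕ):ℂ)+2)*(b:ℂ)*Complex.I) by ring, ← Complex.exp_add]
      congr 1
      push_cast
      ring
    · rw [hm, if_neg hj, if_neg (by rintro ⟨h0, -⟩; exact hj (by simp [h0]))]
      ring
  · have hm : ((k:ℕ)+1) % (n+2) = (k:ℕ)+1 := Nat.mod_eq_of_lt (by have := k.isLt; omega)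
    by_cases hj : (j:ℕ) = (k:ℕ)+1
    · rw [hm, if_pos hj, if_neg (by rintro ⟨-, hl⟩; exact hk (by simp [hl]))]
      rw [hj, mul_one, mul_zero, sub_zero, one_mul, ← Complex.exp_add]
      congr 1
      push_cast
      ring
    · rw [hm, if_neg hj, if_neg (by rintro ⟨-, hl⟩; exact hk (by rw [hl]; simp))]
      ring

lemma E2 (j k : Fin (n+2)) :
    Complex.exp (-(b:ℂ)*Complex.I*(j:ℕ))
        * (Complex.exp (-(b:ℂ)*Complex.I) * (if (k:ℕ) = ((j:ℕ)+1) % (n+2) then 1 else 0))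
      = ((if (k:ℕ) = ((j:ℕ)+1) % (n+2) then 1 else 0)
          - (1 - Complex.exp (-((((n:ℕ):ℂ)+2)*(b:ℂ))*Complex.I))
            * (if j = Fin.last (n+1) ∧ k = 0 then (1:ℂ) else 0))
        * Complex.exp (-(b:ℂ)*Complex.I*(k:ℕ)) := by
  by_cases hj : (j:ℕ) = n+1
  · have hm : ((j:ℕ)+1) % (n+2) = 0 := by
      have h2 : (j:ℕ)+1 = n+2 := by omega
      rw [h2, Nat.mod_self]
    by_cases hk : (k:ℕ) = 0
    · have hk0 : k = 0 := by exact Fin.ext (by simpa using hk)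
      have hjl : j = Fin.last (n+1) := by exact Fin.ext (by simpa using hj)
      rw [hm, if_pos hk, if_pos ⟨hjl, hk0⟩]
      rw [hj, hk, mul_one, mul_one, ← Complex.exp_add,
        show ((1:ℂ) - (1 - Complex.exp (-((((n:ℕ):ℂ)+2)*(b:ℂ))*Complex.I)))
            = Complex.exp (-((((n:ℕ):ℂ)+2)*(b:ℂ))*Complex.I) by ring, ← Complex.exp_add]
      congr 1
      push_cast
      ring
    · rw [hm, if_neg hk, if_neg (by rintro ⟨-, h0⟩; exact hk (by simp [h0]))]
      ring
  · have hm : ((j:ℕ)+1) % (n+2) = (j:ℕ)+1 := Nat.mod_eq_of_lt (by have := j.isLt; omega)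
    by_cases hk : (k:ℕ) = (j:ℕ)+1
    · rw [hm, if_pos hk, if_neg (by rintro ⟨hl, -⟩; exact hj (by simp [hl]))]
      rw [hk, mul_one, mul_zero, sub_zero, one_mul, ← Complex.exp_add]
      congr 1
      push_cast
      ring
    · rw [hm, if_neg hk, if_neg (by rintro ⟨hl, -⟩; exact hj (by rw [hl]; simp))]
      ring


noncomputable def Dm : Matrix (Fin (n+2)) (Fin (n+2)) ℂ :=
  Matrix.diagonal (fun j : Fin (n+2) => Complex.exp (-(b:ℂ)*Complex.I*((j:ℕ):ℂ)))

lemma conj_eq :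
    Dm n b * (x • (1 : Matrix (Fin (n+2)) (Fin (n+2)) ℂ) - (2:ℂ) • harper (n+2) 1 b ε)
      = Mp n x ε b * Dm n b := by
  ext j k
  rw [Dm, Matrix.diagonal_mul, Matrix.mul_diagonal, entry (n+2) x ε b j k,
    Mp_apply, Amat_apply]
  have e0 : Complex.exp (-(b:ℂ)*Complex.I*((j:ℕ):ℂ)) * (if j = k then dd (n+2) x ε j else 0)
      = (if j = k then dd (n+2) x ε j else 0) * Complex.exp (-(b:ℂ)*Complex.I*((k:ℕ):ℂ)) := by
    by_cases h : j = k
    · subst h; ring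
    · simp [h]
  simp only [tC, sC]
  linear_combination e0 - E1 n b j k - E2 n b j k

lemma detDm_ne : (Dm n b).det ≠ 0 := by
  rw [Dm, Matrix.det_diagonal]
  exact Finset.prod_ne_zero_iff.mpr (fun i _ => Complex.exp_ne_zero _)

lemma det_M_eq :
    Matrix.det (x • (1 : Matrix (Fin (n+2)) (Fin (n+2)) ℂ) - (2:ℂ) • harper (n+2) 1 b ε)
      = Matrix.det (Mp n x ε b) := by
  have h := congrArg Matrix.det (conj_eq n x ε b)
  rw [Matrix.det_mul, Matrix.det_mul] at h
  exact mul_left_cancel₀ (detDm_ne n b) (by rw [h, mul_comm])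

lemma myUpdateRow_comm {m : Type*} [DecidableEq m] [Fintype m]
    (M : Matrix m m ℂ) {i j : m} (h : i ≠ j) (r s : m → ℂ) :
    updateRow (updateRow M i r) j s = updateRow (updateRow M j s) i r := by
  ext a c
  rcases eq_or_ne a i with rfl | hai
  · rcases eq_or_ne a j with rfl | haj
    · exact absurd rfl h
    · simp [updateRow_apply, haj]
  · rcases eq_or_ne a j with rfl | haj
    · simp [updateRow_apply, hai]
    · simp [updateRow_apply, hai, haj]

noncomputable def C1 : ℂ := Matrix.det (updateRow (Amat n x ε) 0 (ee1 n))
noncomputable def C2 : ℂ := Matrix.det (updateRow (Amat n x ε) (Fin.last (n+1)) (ee0 n))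
noncomputable def C3 : ℂ :=
  Matrix.det (updateRow (updateRow (Amat n x ε) 0 (ee1 n)) (Fin.last (n+1)) (ee0 n))

lemma det_Mp :
    Matrix.det (Mp n x ε b)
      = Matrix.det (Amat n x ε) + (1 - tC n b) * C1 n x ε
          + (1 - sC n b) * (C2 n x ε + (1 - tC n b) * C3 n x ε) := by
  have hr0 : (fun k => Amat n x ε 0 k + (1 - tC n b) * ee1 n k)
      = (Amat n x ε 0 + (1 - tC n b) • ee1 n) := by
    funext k; simp [smul_eq_mul]
  have hr1 : (fun k => Amat n x ε (Fin.last (n+1)) k + (1 - sC n b) * ee0 n k)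
      = (Amat n x ε (Fin.last (n+1)) + (1 - sC n b) • ee0 n) := by
    funext k; simp [smul_eq_mul]
  set A := Amat n x ε with hA
  set B' := updateRow A 0 (fun k => A 0 k + (1 - tC n b) * ee1 n k) with hB'
  have hBrow : A (Fin.last (n+1)) = B' (Fin.last (n+1)) :=
    (updateRow_ne (last_ne_zero' n)).symm
  rw [Mp, ← hB', hr1, det_updateRow_add]
  rw [hBrow, updateRow_eq_self, det_updateRow_smul]
  rw [hB', hr0, det_updateRow_add, det_updateRow_smul, updateRow_eq_self]
  have h0row : A 0 = (updateRow A (Fin.last (n+1)) (ee0 n)) 0 :=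
    (updateRow_ne (Ne.symm (last_ne_zero' n))).symm
  rw [myUpdateRow_comm _ (show (0 : Fin (n+2)) ≠ Fin.last (n+1) from Ne.symm (last_ne_zero' n)),
    det_updateRow_add, det_updateRow_smul, h0row, updateRow_eq_self,
    myUpdateRow_comm _ (last_ne_zero' n)]
  rw [C1, C2, C3, ← hA]

lemma detG1 : C1 n x ε + C3 n x ε = 1 := by
  classical
  set A := Amat n x ε with hA
  set G : Matrix (Fin (n+2)) (Fin (n+2)) ℂ :=
    updateRow (updateRow A 0 (ee1 n)) (Fin.last (n+1))
      (fun k => A (Fin.last (n+1)) k + ee0 n k) with hG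
  have hsplit : G.det = C1 n x ε + C3 n x ε := by
    have hrw : (fun k => A (Fin.last (n+1)) k + ee0 n k) = (A (Fin.last (n+1)) + ee0 n) := rfl
    have hBrow : A (Fin.last (n+1)) = (updateRow A 0 (ee1 n)) (Fin.last (n+1)) :=
      (updateRow_ne (last_ne_zero' n)).symm
    rw [hG, hrw, det_updateRow_add, hBrow, updateRow_eq_self]
    rw [C1, C3, hA]
  have hG0 : G 0 = ee1 n := by
    rw [hG, updateRow_ne (Ne.symm (last_ne_zero' n)), updateRow_self]
  have hGlast : ∀ k, G (Fin.last (n+1)) k = Amat n x ε (Fin.last (n+1)) k + ee0 n k := by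
    intro k; rw [hG, updateRow_self]
  have hGmid : ∀ i : Fin (n+2), i ≠ 0 → i ≠ Fin.last (n+1) → G i = Amat n x ε i := by
    intro i h0 hl; rw [hG, updateRow_ne hl, updateRow_ne h0]
  set σ := finRotate (n+2) with hσ
  set H := G.submatrix σ id with hH
  have hentry : ∀ i j, H i j = G (σ i) j := fun i j => rfl
  -- row-index analysis helper
  have hrowfacts : ∀ i : Fin (n+2), i ≠ Fin.last (n+1) → ((σ i) : ℕ) = (i:ℕ) + 1 ∧ (i:ℕ) < n+1 := by
    intro i hil
    have h1 : ((σ i) : ℕ) = (i:ℕ) + 1 := by rw [hσ]; exact coe_finRotate_of_ne_last hil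
    refine ⟨h1, ?_⟩
    have h2 := i.isLt
    rcases Nat.lt_or_ge (i:ℕ) (n+1) with h | h
    · exact h
    · exact absurd (Fin.ext (by simp; omega : (i:ℕ) = ((Fin.last (n+1) : Fin (n+2)) : ℕ))) hil
  have htri : H.BlockTriangular id := by
    intro i j hij
    simp only [id_eq] at hij
    rw [hentry]
    rcases eq_or_ne i (Fin.last (n+1)) with rfl | hil
    · rw [hσ, finRotate_last, hG0, ee1, if_neg (Fin.ne_of_lt hij)]
    · obtain ⟨hσv, hivlt⟩ := hrowfacts i hil
      have hjv : (j:ℕ) < (i:ℕ) := hij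
      rcases eq_or_ne (σ i) (Fin.last (n+1)) with hσl | hσl
      · have hiv : (i:ℕ) = n := by
          have := congrArg Fin.val hσl
          simp only [Fin.val_last] at this
          omega
        rw [hσl, hGlast, Amat_apply]
        have hm1 : ((j:ℕ)+1) % (n+2) = (j:ℕ)+1 := Nat.mod_eq_of_lt (by omega)
        have hm2 : (((Fin.last (n+1) : Fin (n+2)) : ℕ)+1) % (n+2) = 0 := by
          rw [Fin.val_last, show (n+1)+1 = n+2 by omega, Nat.mod_self]
        rw [hm1, hm2]
        rw [if_neg (by intro hcon; have := congrArg Fin.val hcon; rw [Fin.val_last] at this; omega)]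
        rw [if_neg (by rw [Fin.val_last]; omega)]
        by_cases hj0 : (j:ℕ) = 0
        · rw [if_pos hj0, ee0, if_pos (Fin.ext (by simpa using hj0))]
          ring
        · rw [if_neg hj0, ee0,
            if_neg (by intro hcon; exact hj0 (by simpa using congrArg Fin.val hcon))]
          ring
      · have hσ0 : σ i ≠ 0 := by
          intro hcon
          have := congrArg Fin.val hcon
          simp only [Fin.val_zero] at this
          omega
        have hσlt : ((σ i) : ℕ) < n+1 := by
          have h2 := (σ i).isLt
          rcases Nat.lt_or_ge ((σ i):ℕ) (n+1) with h | h
          · exact h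
          · exact absurd (Fin.ext (by simp; omega : ((σ i):ℕ) = ((Fin.last (n+1) : Fin (n+2)) : ℕ))) hσl
        rw [hGmid _ hσ0 hσl, Amat_apply]
        have hm1 : ((j:ℕ)+1) % (n+2) = (j:ℕ)+1 := Nat.mod_eq_of_lt (by omega)
        have hm2 : (((σ i):ℕ)+1) % (n+2) = ((σ i):ℕ)+1 := Nat.mod_eq_of_lt (by omega)
        rw [hm1, hm2]
        rw [if_neg (by intro hcon; have := congrArg Fin.val hcon; omega)]
        rw [if_neg (by omega), if_neg (by omega)]
        ring
  have hdiag : ∀ i, H i i = if i = Fin.last (n+1) then 1 else -1 := by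
    intro i
    rw [hentry]
    rcases eq_or_ne i (Fin.last (n+1)) with rfl | hil
    · rw [hσ, finRotate_last, hG0, ee1, if_pos rfl, if_pos rfl]
    · rw [if_neg hil]
      obtain ⟨hσv, hivlt⟩ := hrowfacts i hil
      rcases eq_or_ne (σ i) (Fin.last (n+1)) with hσl | hσl
      · have hiv : (i:ℕ) = n := by
          have := congrArg Fin.val hσl
          simp only [Fin.val_last] at this
          omega
        rw [hσl, hGlast, Amat_apply]
        have hm1 : (((i:ℕ))+1) % (n+2) = (i:ℕ)+1 := Nat.mod_eq_of_lt (by omega)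
        have hm2 : (((Fin.last (n+1) : Fin (n+2)) : ℕ)+1) % (n+2) = 0 := by
          rw [Fin.val_last, show (n+1)+1 = n+2 by omega, Nat.mod_self]
        rw [hm1, hm2]
        rw [if_neg (by intro hcon; have := congrArg Fin.val hcon; rw [Fin.val_last] at this; omega)]
        rw [if_pos (by rw [Fin.val_last]; omega)]
        by_cases hn0 : n = 0
        · rw [if_pos (by omega), ee0, if_pos (Fin.ext (by rw [Fin.val_zero]; omega))]
          ring
        · rw [if_neg (by omega), ee0,
            if_neg (by intro hcon; have := congrArg Fin.val hcon; rw [Fin.val_zero] at this; omega)]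
          ring
      · have hσ0 : σ i ≠ 0 := by
          intro hcon
          have := congrArg Fin.val hcon
          simp only [Fin.val_zero] at this
          omega
        rw [hGmid _ hσ0 hσl, Amat_apply]
        have hσlt : ((σ i) : ℕ) < n+1 := by
          have h2 := (σ i).isLt
          rcases Nat.lt_or_ge ((σ i):ℕ) (n+1) with h | h
          · exact h
          · exact absurd (Fin.ext (by simp; omega : ((σ i):ℕ) = ((Fin.last (n+1) : Fin (n+2)) : ℕ))) hσl
        have hm1 : (((i:ℕ))+1) % (n+2) = (i:ℕ)+1 := Nat.mod_eq_of_lt (by omega)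
        have hm2 : (((σ i):ℕ)+1) % (n+2) = ((σ i):ℕ)+1 := Nat.mod_eq_of_lt (by omega)
        rw [hm1, hm2]
        rw [if_neg (by intro hcon; have := congrArg Fin.val hcon; omega)]
        rw [if_pos (by omega), if_neg (by omega)]
        ring
  have hdetH : H.det = (-1 : ℂ)^(n+1) := by
    rw [Matrix.det_of_upperTriangular htri]
    have : ∀ i : Fin (n+2), H i i = if i = Fin.last (n+1) then 1 else -1 := hdiag
    calc (∏ i : Fin (n+2), H i i)
        = ∏ i : Fin (n+2), (if i = Fin.last (n+1) then (1:ℂ) else -1) := by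
          exact Finset.prod_congr rfl (fun i _ => hdiag i)
      _ = (-1 : ℂ)^(n+1) := by
          rw [Fin.prod_univ_castSucc]
          rw [if_pos rfl]
          rw [Finset.prod_congr rfl (fun i _ => if_neg (Fin.castSucc_lt_last i).ne)]
          simp
  have hperm := Matrix.det_permute σ G
  have hsign : (Equiv.Perm.sign σ : ℂ) = (-1 : ℂ)^(n+1) := by
    rw [hσ, sign_finRotate]
    push_cast
    ring
  rw [← hH] at hperm
  rw [hdetH, hsign] at hperm
  have hne : ((-1 : ℂ))^(n+1) ≠ 0 := pow_ne_zero _ (by norm_num)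
  have hGdet : G.det = 1 := by
    refine mul_left_cancel₀ hne ?_
    rw [mul_one, ← hperm]
  rw [← hsplit, hGdet]

lemma ee0_eq (k : Fin (n+2)) : ee0 n k = if (k:ℕ) = 0 then 1 else 0 := by
  rw [ee0]
  by_cases h : (k:ℕ) = 0
  · rw [if_pos h, if_pos (Fin.ext (by simpa using h))]
  · rw [if_neg h, if_neg (fun hc => h (by simpa using congrArg Fin.val hc))]

lemma ee1_eq (k : Fin (n+2)) : ee1 n k = if (k:ℕ) = n+1 then 1 else 0 := by
  rw [ee1]
  by_cases h : (k:ℕ) = n+1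
  · rw [if_pos h, if_pos (Fin.ext (by simpa using h))]
  · rw [if_neg h, if_neg (fun hc => h (by simpa using congrArg Fin.val hc))]

lemma Amat_apply' (j k : Fin (n+2)) :
    Amat n x ε j k
      = (if (j:ℕ) = (k:ℕ) then dd (n+2) x ε j else 0)
        - (if (j : ℕ) = ((k : ℕ) + 1) % (n+2) then 1 else 0)
        - (if (k : ℕ) = ((j : ℕ) + 1) % (n+2) then 1 else 0) := by
  rw [Amat_apply]
  by_cases h : (j:ℕ) = (k:ℕ)
  · rw [if_pos h, if_pos (Fin.ext h)]
  · rw [if_neg h, if_neg (fun hc => h (congrArg Fin.val hc))]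

lemma mod_succ_char (j : Fin (n+2)) :
    ((j:ℕ) = n+1 ∧ ((j:ℕ)+1) % (n+2) = 0)
      ∨ ((j:ℕ) < n+1 ∧ ((j:ℕ)+1) % (n+2) = (j:ℕ)+1) := by
  by_cases h : (j:ℕ) = n+1
  · exact Or.inl ⟨h, by rw [h, show (n+1)+1 = n+2 by omega, Nat.mod_self]⟩
  · exact Or.inr ⟨by have := j.isLt; omega, Nat.mod_eq_of_lt (by have := j.isLt; omega)⟩

lemma detG2 : C2 n x ε + C3 n x ε = 1 := by
  classical
  set A := Amat n x ε with hA
  set G : Matrix (Fin (n+2)) (Fin (n+2)) ℂ :=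
    updateRow (updateRow A (Fin.last (n+1)) (ee0 n)) 0
      (fun k => A 0 k + ee1 n k) with hG
  have hsplit : G.det = C2 n x ε + C3 n x ε := by
    have hrw : (fun k => A 0 k + ee1 n k) = (A 0 + ee1 n) := rfl
    have h0row : A 0 = (updateRow A (Fin.last (n+1)) (ee0 n)) 0 :=
      (updateRow_ne (Ne.symm (last_ne_zero' n))).symm
    rw [hG, hrw, det_updateRow_add, h0row, updateRow_eq_self,
      myUpdateRow_comm _ (last_ne_zero' n)]
    rw [C2, C3, hA]
  have hGlast : G (Fin.last (n+1)) = ee0 n := by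
    rw [hG, updateRow_ne (last_ne_zero' n), updateRow_self]
  have hG0 : ∀ k, G 0 k = Amat n x ε 0 k + ee1 n k := by
    intro k; rw [hG, updateRow_self]
  have hGmid : ∀ i : Fin (n+2), i ≠ 0 → i ≠ Fin.last (n+1) → G i = Amat n x ε i := by
    intro i h0 hl; rw [hG, updateRow_ne h0, updateRow_ne hl]
  set σ := finRotate (n+2) with hσ
  set H := G.submatrix ⇑σ⁻¹ id with hH
  have hentry : ∀ i j, H i j = G (σ⁻¹ i) j := fun i j => rfl
  have hrfact : ∀ i : Fin (n+2), σ⁻¹ i ≠ Fin.last (n+1) →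
      (i:ℕ) = ((σ⁻¹ i : Fin (n+2)):ℕ) + 1 ∧ ((σ⁻¹ i : Fin (n+2)):ℕ) < n+1 := by
    intro i hrl
    have hri : σ (σ⁻¹ i) = i := Equiv.apply_symm_apply σ i
    have h1 : ((σ (σ⁻¹ i) : Fin (n+2)) : ℕ) = ((σ⁻¹ i : Fin (n+2)):ℕ) + 1 := by
      rw [hσ]; exact coe_finRotate_of_ne_last hrl
    rw [hri] at h1
    refine ⟨h1, ?_⟩
    have h2 := (σ⁻¹ i).isLt
    rcases Nat.lt_or_ge ((σ⁻¹ i : Fin (n+2)):ℕ) (n+1) with h | h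
    · exact h
    · exact absurd (Fin.ext (by simp; omega : ((σ⁻¹ i : Fin (n+2)):ℕ) = ((Fin.last (n+1) : Fin (n+2)) : ℕ))) hrl
  have hzero : ∀ i : Fin (n+2), σ⁻¹ i = Fin.last (n+1) → i = 0 := by
    intro i h
    have hri : σ (σ⁻¹ i) = i := Equiv.apply_symm_apply σ i
    rw [h, hσ, finRotate_last] at hri
    exact hri.symm
  have htri : H.BlockTriangular OrderDual.toDual := by
    intro i j hij
    have hij' : (i:ℕ) < (j:ℕ) := hij
    rw [hentry]
    rcases eq_or_ne (σ⁻¹ i) (Fin.last (n+1)) with hrl | hrl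
    · have hi0 : (i:ℕ) = 0 := by simpa using congrArg Fin.val (hzero i hrl)
      rw [hrl, hGlast, ee0_eq, if_neg (by omega)]
    · obtain ⟨hiv, hrlt⟩ := hrfact i hrl
      have hmj := mod_succ_char n j
      have hjlt := j.isLt
      rcases eq_or_ne (σ⁻¹ i) 0 with hr0 | hr0
      · have hrv : ((σ⁻¹ i : Fin (n+2)):ℕ) = 0 := by simpa using congrArg Fin.val hr0
        rw [hr0, hG0, Amat_apply', ee1_eq]
        simp only [Fin.val_zero]
        simp only [show (0+1) % (n+2) = 1 from Nat.mod_eq_of_lt (by omega)]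
        generalize hm : ((j:ℕ)+1) % (n+2) = m
        rw [hm] at hmj
        simp only [@eq_comm ℕ 0]
        split_ifs <;> first | ring1 | omega
      · have hrv1 : 1 ≤ ((σ⁻¹ i : Fin (n+2)):ℕ) := by
          rcases Nat.eq_zero_or_pos ((σ⁻¹ i : Fin (n+2)):ℕ) with h | h
          · exact absurd (Fin.ext (by simpa using h)) hr0
          · exact h
        rw [hGmid _ hr0 hrl, Amat_apply']
        rw [show (((σ⁻¹ i : Fin (n+2)):ℕ)+1) % (n+2) = ((σ⁻¹ i : Fin (n+2)):ℕ)+1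
          from Nat.mod_eq_of_lt (by omega)]
        generalize hm : ((j:ℕ)+1) % (n+2) = m
        rw [hm] at hmj
        split_ifs <;> first | ring1 | omega
  have hdiag : ∀ i, H i i = if i = 0 then 1 else -1 := by
    intro i
    rw [hentry]
    rcases eq_or_ne (σ⁻¹ i) (Fin.last (n+1)) with hrl | hrl
    · have hi0 : (i:ℕ) = 0 := by simpa using congrArg Fin.val (hzero i hrl)
      rw [hrl, hGlast, ee0_eq, if_pos hi0, if_pos (hzero i hrl)]
    · obtain ⟨hiv, hrlt⟩ := hrfact i hrl
      rw [if_neg (fun hc => by rw [hc] at hiv; simp at hiv)]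
      have hmi := mod_succ_char n i
      have hilt := i.isLt
      rcases eq_or_ne (σ⁻¹ i) 0 with hr0 | hr0
      · have hrv : ((σ⁻¹ i : Fin (n+2)):ℕ) = 0 := by simpa using congrArg Fin.val hr0
        rw [hr0, hG0, Amat_apply', ee1_eq]
        simp only [Fin.val_zero]
        simp only [show (0+1) % (n+2) = 1 from Nat.mod_eq_of_lt (by omega)]
        generalize hm : ((i:ℕ)+1) % (n+2) = m
        rw [hm] at hmi
        simp only [@eq_comm ℕ 0]
        split_ifs <;> first | ring1 | omega
      · have hrv1 : 1 ≤ ((σ⁻¹ i : Fin (n+2)):ℕ) := by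
          rcases Nat.eq_zero_or_pos ((σ⁻¹ i : Fin (n+2)):ℕ) with h | h
          · exact absurd (Fin.ext (by simpa using h)) hr0
          · exact h
        rw [hGmid _ hr0 hrl, Amat_apply']
        rw [show (((σ⁻¹ i : Fin (n+2)):ℕ)+1) % (n+2) = ((σ⁻¹ i : Fin (n+2)):ℕ)+1
          from Nat.mod_eq_of_lt (by omega)]
        generalize hm : ((i:ℕ)+1) % (n+2) = m
        rw [hm] at hmi
        split_ifs <;> first | ring1 | omega
  have hdetH : H.det = (-1 : ℂ)^(n+1) := by
    rw [Matrix.det_of_lowerTriangular H htri]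
    calc (∏ i : Fin (n+2), H i i)
        = ∏ i : Fin (n+2), (if i = 0 then (1:ℂ) else -1) :=
          Finset.prod_congr rfl (fun i _ => hdiag i)
      _ = (-1 : ℂ)^(n+1) := by
          rw [Fin.prod_univ_succ, if_pos rfl]
          rw [Finset.prod_congr rfl (fun i _ => if_neg (Fin.succ_ne_zero i))]
          simp
  have hperm := Matrix.det_permute σ⁻¹ G
  have hsign : ((Equiv.Perm.sign σ⁻¹ : ℤˣ) : ℂ) = (-1 : ℂ)^(n+1) := by
    rw [Equiv.Perm.sign_inv, hσ, sign_finRotate]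
    push_cast
    ring
  rw [← hH] at hperm
  rw [hdetH, hsign] at hperm
  have hne : ((-1 : ℂ))^(n+1) ≠ 0 := pow_ne_zero _ (by norm_num)
  have hGdet : G.det = 1 := by
    refine mul_left_cancel₀ hne ?_
    rw [mul_one, ← hperm]
  rw [← hsplit, hGdet]

lemma hts : tC n b * sC n b = 1 := by
  rw [tC, sC, ← Complex.exp_add,
    show ((((n:ℕ):ℂ)+2)*(b:ℂ)*Complex.I + -((((n:ℕ):ℂ)+2)*(b:ℂ))*Complex.I) = 0 by ring,
    Complex.exp_zero]

lemma hcos : tC n b + sC n b = 2 * ((Real.cos (((n+2 : ℕ) : ℝ) * b) : ℝ) : ℂ) := by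
  rw [tC, sC, Complex.exp_mul_I, Complex.exp_mul_I, Complex.ofReal_cos]
  push_cast
  rw [Complex.cos_neg, Complex.sin_neg]
  ring

theorem main (n : ℕ) (x : ℂ) (b ε : ℝ) :
    Matrix.det (x • (1 : Matrix (Fin (n+2)) (Fin (n+2)) ℂ) - (2 : ℂ) • harper (n+2) 1 b ε)
      = Matrix.det (x • (1 : Matrix (Fin (n+2)) (Fin (n+2)) ℂ) - (2 : ℂ) • harper (n+2) 1 0 ε)
          + 2 - 2 * (Real.cos (((n+2:ℕ) : ℝ) * b) : ℂ) := by
  rw [det_M_eq n x ε b, det_Mp]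
  have hg1 := detG1 n x ε
  have hg2 := detG2 n x ε
  have h3 := hts n b
  have h4 := hcos n b
  have hAeq : Matrix.det (Amat n x ε)
      = Matrix.det (x • (1 : Matrix (Fin (n+2)) (Fin (n+2)) ℂ) - (2 : ℂ) • harper (n+2) 1 0 ε) := rfl
  rw [hAeq]
  linear_combination (1 - tC n b) * hg1 + (1 - sC n b) * hg2 + (C3 n x ε) * h3 - h4

end HCP

/-- The characteristic polynomial of `2·h(1, b, ε)` depends on `b` only through the
additive term `−2cos(Nb)`. -/
theorem harper_charpoly_b_dependence (N : ℕ) (hN : 2 ≤ N) (x : ℂ) (b ε : ℝ) :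
    Matrix.det (x • (1 : Matrix (Fin N) (Fin N) ℂ) - (2 : ℂ) • harper N 1 b ε)
      = Matrix.det (x • (1 : Matrix (Fin N) (Fin N) ℂ) - (2 : ℂ) • harper N 1 0 ε)
          + 2 - 2 * (Real.cos ((N : ℝ) * b) : ℂ) := by
  obtain ⟨n, rfl⟩ : ∃ n : ℕ, N = n + 2 := ⟨N - 2, by omega⟩
  exact HCP.main n x b ε
end

section
/- The determinant of the Harper matrix with ε = 0 and b = 0, namely det(h(1, 0, 0)) = det((X + Xᴴ)/2) = ∏_{j=0}^{N−1} cos(2πj/N), equals 0 if N ≡ 0 (mod 4), equals 2^(1−N) if N is odd, and equals −2^(2−N) if N ≡ 2 (mod 4). -/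
open Matrix Complex

open Polynomial Finset

lemma aux_pow_mod {ζ : ℂ} {N : ℕ} (h : ζ ^ N = 1) (a : ℕ) : ζ ^ (a % N) = ζ ^ a := by
  conv_rhs => rw [← Nat.div_add_mod a N, pow_add, pow_mul, h, one_pow, one_mul]

lemma aux_pow_congr {ζ : ℂ} {N : ℕ} (h : ζ ^ N = 1) {a b : ℕ} (hab : a % N = b % N) :
    ζ ^ a = ζ ^ b := by
  rw [← aux_pow_mod h a, hab, aux_pow_mod h b]

lemma aux_image_range {ζ : ℂ} {n : ℕ} (hn : 0 < n) (h : IsPrimitiveRoot ζ n) :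
    (Finset.range n).image (ζ ^ ·) = Polynomial.nthRootsFinset n (1 : ℂ) := by
  apply Finset.eq_of_subset_of_card_le
  · intro x hx
    simp only [Finset.mem_image, Finset.mem_range] at hx
    obtain ⟨k, hk, rfl⟩ := hx
    rw [Polynomial.mem_nthRootsFinset hn]
    rw [← pow_mul, mul_comm, pow_mul, h.pow_eq_one, one_pow]
  · rw [h.card_nthRootsFinset, Finset.card_image_of_injOn h.injOn_pow, Finset.card_range]

lemma aux_prod_one_add {ζ : ℂ} {n : ℕ} (hn : 0 < n) (h : IsPrimitiveRoot ζ n) :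
    ∏ k ∈ Finset.range n, (1 + ζ ^ k) = (-1:ℂ)^n * ((-1:ℂ)^n - 1) := by
  have h1 := congrArg (Polynomial.eval (-1 : ℂ)) (Polynomial.X_pow_sub_one_eq_prod hn h)
  rw [Polynomial.eval_sub, Polynomial.eval_pow, Polynomial.eval_X, Polynomial.eval_one,
    Polynomial.eval_prod] at h1
  simp only [Polynomial.eval_sub, Polynomial.eval_X, Polynomial.eval_C] at h1
  rw [← aux_image_range hn h, Finset.prod_image h.injOn_pow] at h1
  have h2 : ∏ k ∈ Finset.range n, (1 + ζ ^ k)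
      = ∏ k ∈ Finset.range n, (-1:ℂ) * (-1 - ζ ^ k) :=
    Finset.prod_congr rfl (by intro k _; ring)
  rw [h2, Finset.prod_mul_distrib, Finset.prod_const, Finset.card_range, ← h1]

section
variable (n : ℕ)

lemma key_theta (k : ℕ) : omegaN (n+2) ^ k
    = Complex.exp (((2 * Real.pi * k / (n+2) : ℝ) : ℂ) * Complex.I) := by
  unfold omegaN
  rw [← Complex.exp_nat_mul]
  congr 1
  have : ((n:ℂ)+2) ≠ 0 := by
    have : ((n+2:ℕ):ℂ) ≠ 0 := Nat.cast_ne_zero.2 (by omega)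
    push_cast at this; exact this
  push_cast
  field_simp

lemma key_conj (k : ℕ) : omegaN (n+2) ^ k * (starRingEnd ℂ) (omegaN (n+2) ^ k) = 1 := by
  rw [key_theta]
  rw [← Complex.exp_conj]
  rw [_root_.map_mul, Complex.conj_ofReal, Complex.conj_I]
  rw [← Complex.exp_add]
  ring_nf
  exact Complex.exp_zero

lemma key_2c (k : Fin (n+2)) :
    2 * ((Real.cos (2 * Real.pi * (k:ℕ) / (n+2)) : ℝ) : ℂ)
      = omegaN (n+2) ^ (k:ℕ) + (starRingEnd ℂ) (omegaN (n+2) ^ (k:ℕ)) := by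
  rw [key_theta, Complex.add_conj, Complex.exp_ofReal_mul_I_re]
  push_cast
  ring
end

section
variable (n : ℕ)

lemma key_entry (j m : Fin (n+2)) :
    harper (n+2) 1 0 0 j m = (if (j:ℕ) = ((m:ℕ)+1) % (n+2) then (1:ℂ) else 0)/2
      + (if (m:ℕ) = ((j:ℕ)+1) % (n+2) then (1:ℂ) else 0)/2 := by
  simp [harper, shiftX, Matrix.add_apply, Matrix.smul_apply, Matrix.conjTranspose_apply,
    apply_ite (starRingEnd ℂ)]
  ring_nf
  split_ifs <;> norm_num

lemma key_cond1 (j m : Fin (n+2)) : ((j:ℕ) = ((m:ℕ)+1) % (n+2)) ↔ m = j - 1 := by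
  have hv : ((m+1 : Fin (n+2)):ℕ) = ((m:ℕ)+1) % (n+2) := by
    rw [Fin.val_add, Fin.val_one]
  rw [← hv, Fin.val_inj]
  constructor
  · intro h; rw [h]; simp
  · intro h; rw [h]; simp

lemma key_MQ : harper (n+2) 1 0 0 * dftQ (n+2)
    = dftQ (n+2) * Matrix.diagonal
        (fun k : Fin (n+2) => ((Real.cos (2 * Real.pi * (k:ℕ) / (n+2)) : ℝ) : ℂ)) := by
  have hN : (2:ℕ) ≤ n + 2 := by omega
  have hω1 : omegaN (n+2) ^ (n+2) = 1 :=
    (Complex.isPrimitiveRoot_exp (n+2) (by omega)).pow_eq_one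
  set ω := omegaN (n+2) with hωdef
  have hωne : ω ≠ 0 := by
    intro h; rw [h, zero_pow (by omega : n+2 ≠ 0)] at hω1; exact zero_ne_one hω1
  ext j k
  rw [Matrix.mul_apply, Matrix.mul_diagonal]
  have hre : ∀ m : Fin (n+2), harper (n+2) 1 0 0 j m * dftQ (n+2) m k
      = (if m = j - 1 then dftQ (n+2) (j-1) k / 2 else 0)
        + (if m = j + 1 then dftQ (n+2) (j+1) k / 2 else 0) := by
    intro m
    rw [key_entry]
    have h1 : ((j:ℕ) = ((m:ℕ)+1) % (n+2)) ↔ m = j - 1 := key_cond1 n j m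
    have h2 : ((m:ℕ) = ((j:ℕ)+1) % (n+2)) ↔ m = j + 1 := by
      have hv : ((j+1 : Fin (n+2)):ℕ) = ((j:ℕ)+1) % (n+2) := by
        rw [Fin.val_add, Fin.val_one]
      rw [← hv, Fin.val_inj]
    rw [if_congr h1 rfl rfl, if_congr h2 rfl rfl]
    split_ifs with ha hb hb
    · rw [← ha, ← hb]; ring
    · rw [← ha]; ring
    · rw [← hb]; ring
    · ring
  rw [Finset.sum_congr rfl (fun m _ => hre m), Finset.sum_add_distrib,
    Finset.sum_ite_eq' Finset.univ (j-1), Finset.sum_ite_eq' Finset.univ (j+1)]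
  simp only [Finset.mem_univ, if_true]
  -- now pure algebra
  have hQ : ∀ a : Fin (n+2), dftQ (n+2) a k
      = ω ^ ((a:ℕ) * (k:ℕ)) / ((Real.sqrt ((n+2 : ℕ) : ℝ)) : ℂ) := by
    intro a; rfl
  have hplus : ω ^ (((j+1 : Fin (n+2)):ℕ) * (k:ℕ)) = ω ^ ((j:ℕ)*(k:ℕ)) * ω ^ (k:ℕ) := by
    rw [← pow_add]
    apply aux_pow_congr hω1
    have hv : ((j+1 : Fin (n+2)):ℕ) = ((j:ℕ)+1) % (n+2) := by rw [Fin.val_add, Fin.val_one]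
    rw [hv, Nat.mod_mul_mod]
    congr 1; ring
  have hminus : ω ^ (((j-1 : Fin (n+2)):ℕ) * (k:ℕ)) * ω ^ (k:ℕ) = ω ^ ((j:ℕ)*(k:ℕ)) := by
    rw [← pow_add]
    apply aux_pow_congr hω1
    have h1 : ((j-1:Fin (n+2)) + 1) = j := by simp
    have h2 : ((((j-1):Fin (n+2)):ℕ) + 1) % (n+2) = (j:ℕ) := by
      conv_rhs => rw [← h1]
      rw [Fin.val_add, Fin.val_one]
    calc ((((j-1):Fin (n+2)):ℕ) * (k:ℕ) + (k:ℕ)) % (n+2)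
        = (((((j-1):Fin (n+2)):ℕ) + 1) * (k:ℕ)) % (n+2) := by ring_nf
      _ = ((((((j-1):Fin (n+2)):ℕ) + 1) % (n+2)) * (k:ℕ)) % (n+2) := by rw [Nat.mod_mul_mod]
      _ = ((j:ℕ) * (k:ℕ)) % (n+2) := by rw [h2]
  have hc2 := key_2c n k
  have hu := key_conj n (k:ℕ)
  rw [hQ, hQ, hQ, hplus]
  set A := ω ^ ((j:ℕ)*(k:ℕ))
  set u := ω ^ (k:ℕ)
  set B := ω ^ (((j-1 : Fin (n+2)):ℕ) * (k:ℕ))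
  have hune : u ≠ 0 := pow_ne_zero _ hωne
  have hB : B = A * (starRingEnd ℂ) u := by
    apply mul_right_cancel₀ hune
    rw [hminus, mul_assoc, mul_comm ((starRingEnd ℂ) u) u, hu, mul_one]
  rw [hB]
  set cs : ℂ := ((Real.cos (2 * Real.pi * (k:ℕ) / (n+2)) : ℝ) : ℂ)
  have : A * (starRingEnd ℂ) u + A * u = A * (2 * cs) := by rw [hc2]; ring
  push_cast
  field_simp
  linear_combination (1:ℂ) * ((Real.sqrt ((n:ℝ)+2) : ℂ) : ℂ)⁻¹ * this
end

section
variable (n : ℕ)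

lemma key_detQ : Matrix.det (dftQ (n+2)) ≠ 0 := by
  have hprim : IsPrimitiveRoot (omegaN (n+2)) (n+2) := by
    unfold omegaN; exact Complex.isPrimitiveRoot_exp (n+2) (by omega)
  have hQ : dftQ (n+2)
      = ((Real.sqrt ((n+2:ℕ):ℝ) : ℂ))⁻¹ • Matrix.vandermonde (fun i : Fin (n+2) => omegaN (n+2) ^ (i:ℕ)) := by
    ext i j
    simp only [dftQ, Matrix.smul_apply, Matrix.vandermonde_apply, Matrix.of_apply, smul_eq_mul]
    rw [← pow_mul, div_eq_inv_mul]
  rw [hQ, Matrix.det_smul]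
  apply mul_ne_zero
  · apply pow_ne_zero
    apply inv_ne_zero
    rw [Ne, Complex.ofReal_eq_zero]
    positivity
  · rw [Matrix.det_vandermonde_ne_zero_iff]
    intro a b hab
    exact Fin.ext (hprim.pow_inj a.isLt b.isLt hab)

lemma key_det : Matrix.det (harper (n+2) 1 0 0)
    = ∏ k : Fin (n+2), ((Real.cos (2 * Real.pi * (k:ℕ) / (n+2)) : ℝ) : ℂ) := by
  have h := congrArg Matrix.det (key_MQ n)
  rw [Matrix.det_mul, Matrix.det_mul, Matrix.det_diagonal] at h
  apply mul_right_cancel₀ (key_detQ n)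
  rw [h]; ring
end

section
variable (n : ℕ)

lemma key_prod : ∏ k : Fin (n+2), ((Real.cos (2 * Real.pi * (k:ℕ) / (n+2)) : ℝ) : ℂ)
    = if (n+2) % 4 = 0 then 0
      else if (n+2) % 2 = 1 then (2 : ℂ) ^ (1 - ((n+2 : ℕ) : ℤ))
      else -(2 : ℂ) ^ (2 - ((n+2 : ℕ) : ℤ)) := by
  set N : ℕ := n + 2 with hNdef
  have hNpos : 0 < N := by omega
  have hprim : IsPrimitiveRoot (omegaN N) N := by
    unfold omegaN; exact Complex.isPrimitiveRoot_exp N (by omega)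
  set ω := omegaN N with hωdef
  have hω1 : ω ^ N = 1 := hprim.pow_eq_one
  have hωne : ω ≠ 0 := by
    intro h; rw [h, zero_pow (by omega : N ≠ 0)] at hω1; exact zero_ne_one hω1
  set c : Fin N → ℂ := fun k => ((Real.cos (2 * Real.pi * (k:ℕ) / ((n:ℝ)+2)) : ℝ) : ℂ) with hcdef
  -- pointwise identity
  have hpt : ∀ k : Fin N, c k * (2 * ω ^ (k:ℕ)) = (ω^2) ^ (k:ℕ) + 1 := by
    intro k
    have h1 := key_2c n k
    have h2 := key_conj n (k:ℕ)
    calc c k * (2 * ω ^ (k:ℕ)) = (2 * c k) * ω ^ (k:ℕ) := by ring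
      _ = (ω ^ (k:ℕ) + (starRingEnd ℂ) (ω ^ (k:ℕ))) * ω ^ (k:ℕ) := by rw [h1]
      _ = ω ^ (k:ℕ) * ω ^ (k:ℕ) + ω ^ (k:ℕ) * (starRingEnd ℂ) (ω ^ (k:ℕ)) := by ring
      _ = (ω^2) ^ (k:ℕ) + 1 := by rw [h2, ← pow_add, ← pow_mul]; congr 2; ring
  have hmain : (∏ k : Fin N, c k) * ((2:ℂ)^N * ∏ k : Fin N, ω ^ (k:ℕ))
      = ∏ i ∈ Finset.range N, (1 + (ω^2) ^ i) := by
    calc (∏ k : Fin N, c k) * ((2:ℂ)^N * ∏ k : Fin N, ω ^ (k:ℕ))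
        = ∏ k : Fin N, (c k * (2 * ω ^ (k:ℕ))) := by
          rw [Finset.prod_mul_distrib, Finset.prod_mul_distrib, Finset.prod_const,
            Finset.card_univ, Fintype.card_fin]
          try ring
      _ = ∏ k : Fin N, ((ω^2) ^ (k:ℕ) + 1) := Finset.prod_congr rfl (fun k _ => hpt k)
      _ = ∏ i ∈ Finset.range N, ((ω^2) ^ i + 1) :=
          Fin.prod_univ_eq_prod_range (fun i => (ω^2) ^ i + 1) N
      _ = ∏ i ∈ Finset.range N, (1 + (ω^2) ^ i) := Finset.prod_congr rfl (fun i _ => add_comm _ _)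
  have hT : ∏ k : Fin N, ω ^ (k:ℕ) = ω ^ (N*(N-1)/2) := by
    rw [Finset.prod_pow_eq_pow_sum]
    congr 1
    rw [Fin.sum_univ_eq_sum_range (fun i => i) N]
    have := Finset.sum_range_id_mul_two N
    omega
  by_cases h4 : N % 4 = 0
  · -- case N ≡ 0 mod 4
    rw [if_pos h4]
    obtain ⟨m, hm, hm2, hmpos⟩ : ∃ m, N = m + m ∧ m % 2 = 0 ∧ 0 < m := ⟨N/2, by omega, by omega, by omega⟩
    have hη : IsPrimitiveRoot (ω^2) m := hprim.pow hNpos (by omega)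
    have hη1 : (ω^2) ^ m = 1 := by rw [← pow_mul, show 2*m = N by omega, hω1]
    have hS : ∏ i ∈ Finset.range N, (1 + (ω^2) ^ i) = 0 := by
      rw [hm, Finset.prod_range_add]
      have : ∏ i ∈ Finset.range m, (1 + (ω^2) ^ i) = 0 := by
        rw [aux_prod_one_add hmpos hη, (Nat.even_iff.2 hm2).neg_one_pow]
        ring
      rw [this, zero_mul]
    have h2T : (2:ℂ)^N * ∏ k : Fin N, ω ^ (k:ℕ) ≠ 0 := by
      apply mul_ne_zero (pow_ne_zero _ two_ne_zero)
      rw [hT]; exact pow_ne_zero _ hωne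
    have := hmain
    rw [hS] at this
    exact (mul_eq_zero.mp this).resolve_right h2T
  · by_cases h2 : N % 2 = 1
    · -- N odd
      rw [if_neg h4, if_pos h2]
      have hcop : Nat.Coprime 2 N := (Nat.prime_two.coprime_iff_not_dvd).2 (by omega)
      have hη : IsPrimitiveRoot (ω^2) N := hprim.pow_of_coprime 2 hcop
      have hS : ∏ i ∈ Finset.range N, (1 + (ω^2) ^ i) = 2 := by
        rw [aux_prod_one_add hNpos hη, (Nat.odd_iff.2 h2).neg_one_pow]
        ring
      have hdiv : N*(N-1)/2 = N * ((N-1)/2) := by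
        have h' : N - 1 = 2*((N-1)/2) := by omega
        obtain ⟨t, ht⟩ : ∃ t, N*((N-1)/2) = t := ⟨_, rfl⟩
        conv_lhs => rw [h']
        rw [show N*(2*((N-1)/2)) = 2*(N*((N-1)/2)) by ring, ht]
        omega
      have hTval : ∏ k : Fin N, ω ^ (k:ℕ) = 1 := by
        rw [hT, hdiv, pow_mul, hω1, one_pow]
      rw [hTval, hS, mul_one] at hmain
      have h2N : (2:ℂ)^N ≠ 0 := pow_ne_zero _ two_ne_zero
      rw [zpow_sub₀ (two_ne_zero), zpow_one, zpow_natCast]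
      rw [eq_div_iff (pow_ne_zero _ (two_ne_zero))]
      linear_combination hmain
    · -- N ≡ 2 mod 4
      rw [if_neg h4, if_neg h2]
      obtain ⟨m, hm, hm2, hmpos⟩ : ∃ m, N = m + m ∧ m % 2 = 1 ∧ 0 < m := ⟨N/2, by omega, by omega, by omega⟩
      have hη : IsPrimitiveRoot (ω^2) m := hprim.pow hNpos (by omega)
      have hη1 : (ω^2) ^ m = 1 := by rw [← pow_mul, show 2*m = N by omega, hω1]
      have hI : ∏ i ∈ Finset.range m, (1 + (ω^2) ^ i) = 2 := by
        rw [aux_prod_one_add hmpos hη, (Nat.odd_iff.2 hm2).neg_one_pow]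
        ring
      have hS : ∏ i ∈ Finset.range N, (1 + (ω^2) ^ i) = 4 := by
        rw [hm, Finset.prod_range_add]
        have heq : ∏ i ∈ Finset.range m, (1 + (ω^2) ^ (m + i))
            = ∏ i ∈ Finset.range m, (1 + (ω^2) ^ i) := by
          apply Finset.prod_congr rfl
          intro i _
          rw [pow_add, hη1, one_mul]
        rw [heq, hI]; norm_num
      have hωm : ω ^ m = -1 := by
        have hsq : (ω^m) * (ω^m) = 1 := by rw [← pow_add, show m + m = N from hm.symm, hω1]
        have hne1 : ω ^ m ≠ 1 := hprim.pow_ne_one_of_pos_of_lt hmpos.ne' (by omega)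
        have : (ω^m - 1) * (ω^m + 1) = 0 := by linear_combination hsq
        rcases mul_eq_zero.mp this with h | h
        · exact absurd (by linear_combination h) hne1
        · linear_combination h
      have hdiv : N*(N-1)/2 = m * (N-1) := by
        have h' : N*(N-1) = 2*(m*(N-1)) := by rw [hm]; ring
        obtain ⟨t, ht⟩ : ∃ t, m*(N-1) = t := ⟨_, rfl⟩
        rw [h', ht]
        omega
      have hTval : ∏ k : Fin N, ω ^ (k:ℕ) = -1 := by
        rw [hT, hdiv, pow_mul, hωm,
          (Nat.odd_iff.2 (by omega : (N-1) % 2 = 1)).neg_one_pow]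
      rw [hTval, hS] at hmain
      have h2N : (2:ℂ)^N ≠ 0 := pow_ne_zero _ two_ne_zero
      rw [zpow_sub₀ (two_ne_zero), zpow_natCast,
        show ((2:ℂ)^(2:ℤ)) = 4 by norm_num]
      field_simp
      linear_combination -hmain
end

/-- The determinant of `h(1, 0, 0) = (X + Xᴴ)/2` equals the product of the cosines
`∏_{j} cos(2πj/N)`, which is `0` if `N ≡ 0 (mod 4)`, `2^(1−N)` if `N` is odd, and
`−2^(2−N)` if `N ≡ 2 (mod 4)`. -/
theorem harper_det_eps_zero (N : ℕ) (hN : 2 ≤ N) :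
    Matrix.det (harper N 1 0 0) = ∏ j : Fin N, ((Real.cos (2 * Real.pi * (j : ℕ) / N) : ℝ) : ℂ)
      ∧ Matrix.det (harper N 1 0 0)
          = if N % 4 = 0 then 0
            else if N % 2 = 1 then (2 : ℂ) ^ (1 - (N : ℤ))
            else -(2 : ℂ) ^ (2 - (N : ℤ)) := by
  obtain ⟨n, rfl⟩ : ∃ n, N = n + 2 := ⟨N - 2, by omega⟩
  have hd := key_det n
  have hp := key_prod n
  have hcast : (((n+2:ℕ)):ℝ) = (n:ℝ)+2 := by push_cast; ring
  constructor
  · rw [hd]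
    apply Finset.prod_congr rfl
    intro j _
    rw [hcast]
  · rw [hd, hp]
end
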